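/- arXiv:2412.00735 — 13 statements merged into one kernel-verified Lean document; each statement's English description precedes it below -/
import Mathlib

section
/- Let a(∂,λ) ∈ ℂ[∂,λ] be a polynomial in two variables satisfying a(∂+λ,μ)·a(∂,λ) = (λ−μ)·a(∂,λ+μ) + a(∂+μ,λ)·a(∂,μ) for all ∂,λ,μ ∈ ℂ. Then either a = 0, or there exist β, C₁ ∈ ℂ such that a(∂,λ) = ∂ + βλ + C₁. -/
open Polynomial

noncomputable def ev2 (f : MvPolynomial (Fin 2) ℂ) (x y : ℂ) : ℂ :=
  MvPolynomial.eval ![x, y] f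

private lemma biv_zero (P : Polynomial (Polynomial ℂ))
    (h : ∀ d l : ℂ, Polynomial.eval d (P.map (Polynomial.evalRingHom l)) = 0) : P = 0 := by
  apply Polynomial.ext
  intro k
  rw [Polynomial.coeff_zero]
  apply Polynomial.funext
  intro l
  have h2 : P.map (Polynomial.evalRingHom l) = 0 := Polynomial.funext (fun d => by simpa using h d l)
  have := congrArg (fun p => Polynomial.coeff p k) h2
  simpa [Polynomial.coeff_map] using this

private lemma coeff_mul_top (k : ℕ) (u v : ℂ[X]) (hu : u.natDegree ≤ k+1) (hv : v.natDegree ≤ k+1) :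
    (u*v).coeff (2*k+1) = u.coeff (k+1) * v.coeff k + u.coeff k * v.coeff (k+1) := by
  rw [Polynomial.coeff_mul, Finset.Nat.sum_antidiagonal_eq_sum_range_succ_mk]
  have hsub : ({k, k+1} : Finset ℕ) ⊆ Finset.range (2*k+1).succ := by
    intro x hx
    simp only [Finset.mem_insert, Finset.mem_singleton] at hx
    rcases hx with h|h <;> simp [h] <;> omega
  rw [← Finset.sum_subset hsub (by
    intro x hx hnx
    simp only [Finset.mem_insert, Finset.mem_singleton, not_or] at hnx
    by_cases hxk : x < k
    · have : v.natDegree < 2*k+1-x := by omega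
      rw [Polynomial.coeff_eq_zero_of_natDegree_lt this, mul_zero]
    · have : u.natDegree < x := by omega
      rw [Polynomial.coeff_eq_zero_of_natDegree_lt this, zero_mul])]
  rw [Finset.sum_insert (by simp), Finset.sum_singleton]
  have e1 : 2*k+1-k = k+1 := by omega
  have e2 : 2*k+1-(k+1) = k := by omega
  rw [e1, e2]
  ring

private lemma taylor_coeff_top (k : ℕ) (t : ℂ) (q : ℂ[X]) (hq : q.natDegree ≤ k+1) :
    (Polynomial.taylor t q).coeff (k+1) = q.coeff (k+1) := by
  rw [Polynomial.taylor_coeff]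
  have hd : ((Polynomial.hasseDeriv (k+1)) q).natDegree ≤ 0 := by
    have := Polynomial.natDegree_hasseDeriv_le q (k+1); omega
  rw [Polynomial.eq_C_of_natDegree_le_zero hd, Polynomial.eval_C, Polynomial.hasseDeriv_coeff]
  simp

private lemma taylor_coeff_low (k : ℕ) (t : ℂ) (q : ℂ[X]) (hq : q.natDegree ≤ k+1) :
    (Polynomial.taylor t q).coeff k = q.coeff k + ((k : ℂ)+1) * t * q.coeff (k+1) := by
  rw [Polynomial.taylor_coeff]
  have hd : ((Polynomial.hasseDeriv k) q).natDegree < 2 := by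
    have := Polynomial.natDegree_hasseDeriv_le q k; omega
  rw [Polynomial.eval_eq_sum_range' hd, Finset.sum_range_succ, Finset.sum_range_one]
  have h1 : (0 + k).choose k = 1 := by simp
  have h2 : (1 + k).choose k = k + 1 := by rw [Nat.add_comm]; exact Nat.choose_succ_self_right k
  rw [Polynomial.hasseDeriv_coeff, Polynomial.hasseDeriv_coeff, h1, h2]
  push_cast
  ring_nf

private lemma stmt0_core (a : MvPolynomial (Fin 2) ℂ)
    (h : ∀ d l m : ℂ, ev2 a (d + l) m * ev2 a d l
      = (l - m) * ev2 a d (l + m) + ev2 a (d + m) l * ev2 a d m)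
    (B : Polynomial (Polynomial ℂ))
    (hF : ∀ d l : ℂ, ev2 a d l = Polynomial.eval d (Polynomial.map (Polynomial.evalRingHom l) B))
    (hB : B ≠ 0) :
    ∃ β C₁ : ℂ, ∀ d l : ℂ, ev2 a d l = d + β * l + C₁ := by
  -- Step B: ev2 a x 0 = x + C₁
  set q0 : Polynomial ℂ := B.map (Polynomial.evalRingHom 0) with hq0def
  have hq0eval : ∀ d : ℂ, q0.eval d = ev2 a d 0 := fun d => (hF d 0).symm
  set G : Polynomial (Polynomial ℂ) :=
    (q0.map Polynomial.C).comp (Polynomial.X + Polynomial.C Polynomial.X)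
      - q0.map Polynomial.C - Polynomial.C Polynomial.X with hGdef
  have hmapid : ∀ l : ℂ, (q0.map Polynomial.C).map (Polynomial.evalRingHom l) = q0 := by
    intro l
    rw [Polynomial.map_map]
    have : (Polynomial.evalRingHom l).comp (Polynomial.C : ℂ →+* Polynomial ℂ) = RingHom.id ℂ := by
      ext c; simp
    rw [this, Polynomial.map_id]
  have hGeval : ∀ d l : ℂ,
      Polynomial.eval d (G.map (Polynomial.evalRingHom l)) = q0.eval (d+l) - q0.eval d - l := by
    intro d l
    rw [hGdef]
    simp only [Polynomial.map_sub, Polynomial.map_comp, hmapid, Polynomial.map_add,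
      Polynomial.map_X, Polynomial.map_C, Polynomial.eval_sub, Polynomial.eval_comp,
      Polynomial.eval_add, Polynomial.eval_X, Polynomial.eval_C, Polynomial.coe_evalRingHom]
  have hprod : B * G = 0 := by
    apply biv_zero
    intro d l
    rw [Polynomial.map_mul, Polynomial.eval_mul, hGeval, hq0eval, hq0eval, ← hF]
    have h0 := h d l 0
    simp only [add_zero, sub_zero] at h0
    linear_combination h0
  have hG : G = 0 := by
    rcases mul_eq_zero.mp hprod with h' | h'
    · exact absurd h' hB
    · exact h'
  set C₁ := ev2 a 0 0 with hC₁
  have hA0 : ∀ x : ℂ, ev2 a x 0 = x + C₁ := by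
    intro x
    have h1 := hGeval 0 x
    rw [hG] at h1
    simp only [Polynomial.map_zero, Polynomial.eval_zero, zero_add] at h1
    rw [hq0eval, hq0eval] at h1
    linear_combination -h1
  -- Step C: degree of B at most 1
  have hdeg : B.natDegree ≤ 1 := by
    by_contra hdeg
    push_neg at hdeg
    obtain ⟨k, hk1, hk2⟩ : ∃ k : ℕ, B.natDegree = k + 1 ∧ 1 ≤ k := ⟨B.natDegree - 1, by omega, by omega⟩
    set p : Polynomial ℂ := B.coeff (k+1) with hpdef
    have hp : p ≠ 0 := by
      have := Polynomial.leadingCoeff_ne_zero.mpr hB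
      rwa [Polynomial.leadingCoeff, hk1] at this
    have hfin : {x : ℂ | p.IsRoot x}.Finite := Polynomial.finite_setOf_isRoot hp
    obtain ⟨l, hl⟩ := (Set.Finite.infinite_compl hfin).nonempty
    obtain ⟨m, hm⟩ := (Set.Finite.infinite_compl (hfin.union (Set.finite_singleton l))).nonempty
    simp only [Set.mem_compl_iff, Set.mem_union, Set.mem_setOf_eq, Set.mem_singleton_iff,
      not_or] at hl hm
    obtain ⟨hm1, hm2⟩ := hm
    have hl' : p.eval l ≠ 0 := hl
    have hm' : p.eval m ≠ 0 := hm1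
    have hql : (B.map (Polynomial.evalRingHom l)).natDegree ≤ k+1 := hk1 ▸ Polynomial.natDegree_map_le
    have hqm : (B.map (Polynomial.evalRingHom m)).natDegree ≤ k+1 := hk1 ▸ Polynomial.natDegree_map_le
    have hqs : (B.map (Polynomial.evalRingHom (l+m))).natDegree ≤ k+1 := hk1 ▸ Polynomial.natDegree_map_le
    have hEq : (Polynomial.taylor l (B.map (Polynomial.evalRingHom m))) * (B.map (Polynomial.evalRingHom l))
        = Polynomial.C (l - m) * (B.map (Polynomial.evalRingHom (l+m)))
          + (Polynomial.taylor m (B.map (Polynomial.evalRingHom l))) * (B.map (Polynomial.evalRingHom m)) := by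
      apply Polynomial.funext
      intro d
      rw [Polynomial.taylor_apply, Polynomial.taylor_apply]
      simp only [Polynomial.eval_mul, Polynomial.eval_add, Polynomial.eval_comp,
        Polynomial.eval_X, Polynomial.eval_C]
      rw [← hF, ← hF, ← hF, ← hF, ← hF]
      exact h d l m
    have hco := congrArg (fun P => Polynomial.coeff P (2*k+1)) hEq
    simp only [Polynomial.coeff_add, Polynomial.coeff_C_mul] at hco
    rw [coeff_mul_top k _ _ (by rwa [Polynomial.natDegree_taylor]) hql,
      coeff_mul_top k _ _ (by rwa [Polynomial.natDegree_taylor]) hqm,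
      Polynomial.coeff_eq_zero_of_natDegree_lt (lt_of_le_of_lt hqs (by omega)),
      taylor_coeff_top k l _ hqm, taylor_coeff_low k l _ hqm,
      taylor_coeff_top k m _ hql, taylor_coeff_low k m _ hql,
      Polynomial.coeff_map, Polynomial.coeff_map] at hco
    have hzero : ((k:ℂ)+1) * (l - m) * (p.eval l * p.eval m) = 0 := by
      rw [Polynomial.coeff_map, Polynomial.coeff_map, ← hpdef] at hco
      simp only [Polynomial.coe_evalRingHom] at hco
      linear_combination hco
    have : ((k:ℂ)+1) * (l - m) ≠ 0 :=
      mul_ne_zero (Nat.cast_add_one_ne_zero k) (sub_ne_zero.mpr (fun hh => hm2 hh.symm))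
    exact (mul_ne_zero this (mul_ne_zero hl' hm')) hzero
  -- Step D
  set b0 : Polynomial ℂ := B.coeff 0 with hb0def
  set b1 : Polynomial ℂ := B.coeff 1 with hb1def
  have hc : ∀ d l : ℂ, ev2 a d l = b0.eval l + b1.eval l * d := by
    intro d l
    rw [hF]
    have hlt : (B.map (Polynomial.evalRingHom l)).natDegree < 2 :=
      lt_of_le_of_lt (le_trans Polynomial.natDegree_map_le hdeg) (by omega)
    rw [Polynomial.eval_eq_sum_range' hlt, Finset.sum_range_succ, Finset.sum_range_one]
    simp [Polynomial.coeff_map, hb0def, hb1def]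
  have hc01 : b0.eval 0 = C₁ := by
    have h1 := hc 0 0
    have h2 := hA0 0
    rw [h1] at h2
    linear_combination h2
  have hc11 : b1.eval 0 = 1 := by
    have h1 := hc 1 0
    have h2 := hA0 1
    rw [h1] at h2
    linear_combination h2 - hc01
  have hlin : ∀ l m : ℂ, (l - m) * (b1.eval l * b1.eval m - b1.eval (l+m)) = 0 := by
    intro l m
    have h1 := h 1 l m
    have h0 := h 0 l m
    simp only [hc] at h1 h0
    linear_combination h1 - h0
  have hb1ne : ∀ r : ℂ, b1.eval r ≠ 0 := by
    intro r
    by_cases hr : r = 0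
    · rw [hr, hc11]; exact one_ne_zero
    · have h1 := hlin r (-r)
      have h2 : r - -r ≠ 0 := by
        intro hh; apply hr; linear_combination hh / 2
      have h3 := (mul_eq_zero.mp h1).resolve_left h2
      have h4 : b1.eval r * b1.eval (-r) = 1 := by
        rw [sub_eq_zero] at h3
        rw [h3]
        rw [add_neg_cancel, hc11]
      intro hh
      rw [hh, zero_mul] at h4
      exact one_ne_zero h4.symm
  have hb1const : ∀ l : ℂ, b1.eval l = 1 := by
    have hdb : b1.degree ≤ 0 := by
      by_contra hd
      push_neg at hd
      obtain ⟨z, hz⟩ := Complex.exists_root hd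
      exact hb1ne z hz
    intro l
    have := hc11
    rw [Polynomial.eq_C_of_degree_le_zero hdb] at this ⊢
    simpa using this
  have hc' : ∀ d l : ℂ, ev2 a d l = b0.eval l + d := by
    intro d l; rw [hc, hb1const, one_mul]
  have hc0id : ∀ l m : ℂ, l * b0.eval l - m * b0.eval m = (l - m) * b0.eval (l+m) := by
    intro l m
    have h0 := h 0 l m
    simp only [hc'] at h0
    linear_combination h0
  set Q : Polynomial ℂ := b0 - Polynomial.C C₁ with hQdef
  have hQeval : ∀ x : ℂ, Q.eval x = b0.eval x - C₁ := by intro x; simp [hQdef]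
  have hQ0 : Q.eval 0 = 0 := by rw [hQeval, hc01]; ring
  have hqid : ∀ l m : ℂ, l * Q.eval l - m * Q.eval m = (l - m) * Q.eval (l+m) := by
    intro l m
    rw [hQeval, hQeval, hQeval]
    linear_combination hc0id l m
  have hder : ∀ l : ℂ, l * (Polynomial.derivative Q).eval l = Q.eval l := by
    intro l
    have hP : Polynomial.C (l * Q.eval l) - Polynomial.X * Q
        = (Polynomial.C l - Polynomial.X) * (Q.comp (Polynomial.C l + Polynomial.X)) := by
      apply Polynomial.funext
      intro m
      simp only [Polynomial.eval_sub, Polynomial.eval_mul, Polynomial.eval_C, Polynomial.eval_X,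
        Polynomial.eval_comp, Polynomial.eval_add]
      linear_combination hqid l m
    have hd := congrArg (fun p => Polynomial.eval 0 (Polynomial.derivative p)) hP
    simp [Polynomial.derivative_comp, hQ0] at hd
    linear_combination -hd
  have hXQ : Polynomial.X * Polynomial.derivative Q = Q := by
    apply Polynomial.funext
    intro l
    rw [Polynomial.eval_mul, Polynomial.eval_X]
    exact hder l
  set β : ℂ := Q.coeff 1 with hβdef
  have hQform : Q = Polynomial.C β * Polynomial.X := by
    apply Polynomial.ext
    intro n
    rcases n with _ | n
    · rw [← hXQ]
      simp [Polynomial.mul_coeff_zero]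
    · have hcoeff : Q.coeff (n+1) = Q.coeff (n+1) * ((n:ℂ)+1) := by
        conv_lhs => rw [← hXQ]
        rw [Polynomial.coeff_X_mul, Polynomial.coeff_derivative]
      by_cases hn : n = 0
      · subst hn
        simp [Polynomial.coeff_C_mul, Polynomial.coeff_X, hβdef]
      · have h3 : Q.coeff (n+1) * (n:ℂ) = 0 := by linear_combination -hcoeff
        have h4 : Q.coeff (n+1) = 0 := (mul_eq_zero.mp h3).resolve_right (Nat.cast_ne_zero.mpr hn)
        rw [h4, Polynomial.coeff_C_mul, Polynomial.coeff_X, if_neg (by omega)]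
        ring
  refine ⟨β, C₁, fun d l => ?_⟩
  rw [hc' d l]
  have h5 : Q.eval l = β * l := by rw [hQform]; simp
  rw [hQeval] at h5
  linear_combination h5

theorem stmt0 (a : MvPolynomial (Fin 2) ℂ)
    (h : ∀ d l m : ℂ, ev2 a (d + l) m * ev2 a d l
      = (l - m) * ev2 a d (l + m) + ev2 a (d + m) l * ev2 a d m) :
    a = 0 ∨ ∃ β C₁ : ℂ, ∀ d l : ℂ, ev2 a d l = d + β * l + C₁ := by
  classical
  set B : Polynomial (Polynomial ℂ) := MvPolynomial.eval₂ (Polynomial.C.comp Polynomial.C)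
      ![Polynomial.X, Polynomial.C Polynomial.X] a with hBdef
  have hF : ∀ d l : ℂ, ev2 a d l = Polynomial.eval d (Polynomial.map (Polynomial.evalRingHom l) B) := by
    intro d l
    have hcl := MvPolynomial.eval₂_comp_left
      ((Polynomial.evalRingHom d).comp (Polynomial.mapRingHom (Polynomial.evalRingHom l)))
      (Polynomial.C.comp Polynomial.C) ![Polynomial.X, Polynomial.C Polynomial.X] a
    have h1 : ((Polynomial.evalRingHom d).comp (Polynomial.mapRingHom (Polynomial.evalRingHom l))).comp
        (Polynomial.C.comp Polynomial.C) = RingHom.id ℂ := by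
      ext c; simp
    have h2 : (⇑((Polynomial.evalRingHom d).comp (Polynomial.mapRingHom (Polynomial.evalRingHom l)))) ∘
        ![Polynomial.X, Polynomial.C Polynomial.X] = ![d, l] := by
      funext i; fin_cases i <;> simp
    rw [h1, h2] at hcl
    have h3 : ev2 a d l = MvPolynomial.eval₂ (RingHom.id ℂ) ![d, l] a := rfl
    rw [h3, ← hcl, hBdef]
    simp
  by_cases hB : B = 0
  · left
    apply MvPolynomial.funext
    intro x
    have hx : x = ![x 0, x 1] := by
      funext i; fin_cases i <;> rfl
    rw [hx]
    have := hF (x 0) (x 1)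
    rw [hB] at this
    simpa [ev2] using this
  · right
    exact stmt0_core a h B hF hB
end

section
/- Let b(∂,λ) ∈ ℂ[∂,λ] be a polynomial satisfying b(∂+λ,μ)·b(∂,λ) = b(∂+μ,λ)·b(∂,μ) for all ∂,λ,μ ∈ ℂ. Then b does not depend on ∂, i.e., there exists b₀(λ) ∈ ℂ[λ] with b(∂,λ) = b₀(λ). -/
open Polynomial

/-- slice in the first variable: polynomial in `d` for fixed `y` -/
noncomputable def Pd (b : MvPolynomial (Fin 2) ℂ) (y : ℂ) : Polynomial ℂ :=
  MvPolynomial.aeval ![Polynomial.X, Polynomial.C y] b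

/-- slice in the second variable: polynomial in `l` for fixed `x` -/
noncomputable def Ql (b : MvPolynomial (Fin 2) ℂ) (x : ℂ) : Polynomial ℂ :=
  MvPolynomial.aeval ![Polynomial.C x, Polynomial.X] b

lemma eval_Pd (b : MvPolynomial (Fin 2) ℂ) (x y : ℂ) :
    (Pd b y).eval x = ev2 b x y := by
  rw [Pd]
  induction b using MvPolynomial.induction_on with
  | C a => simp [ev2]
  | add p q hp hq => simp [ev2] at hp hq ⊢; rw [hp, hq]
  | mul_X p i hp =>
      simp [ev2] at hp ⊢
      rw [hp]
      fin_cases i <;> simp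

lemma eval_Ql (b : MvPolynomial (Fin 2) ℂ) (x y : ℂ) :
    (Ql b x).eval y = ev2 b x y := by
  rw [Ql]
  induction b using MvPolynomial.induction_on with
  | C a => simp [ev2]
  | add p q hp hq => simp [ev2] at hp hq ⊢; rw [hp, hq]
  | mul_X p i hp =>
      simp [ev2] at hp ⊢
      rw [hp]
      fin_cases i <;> simp

theorem stmt1 (b : MvPolynomial (Fin 2) ℂ)
    (h : ∀ d l m : ℂ, ev2 b (d + l) m * ev2 b d l = ev2 b (d + m) l * ev2 b d m) :
    ∃ b₀ : Polynomial ℂ, ∀ d l : ℂ, ev2 b d l = b₀.eval l := by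
  have key : ∀ d l : ℂ, ev2 b d l = ev2 b 0 l := by
    by_contra hc
    push_neg at hc
    obtain ⟨d1, l1, hd1⟩ := hc
    -- the polynomial `Pd b l1` is nonconstant
    have hdeg : 0 < (Pd b l1).degree := by
      rcases Nat.eq_zero_or_pos (Pd b l1).natDegree with h0 | h0
      · obtain ⟨a, ha⟩ := Polynomial.natDegree_eq_zero.mp h0
        exact absurd (by rw [← eval_Pd, ← eval_Pd, ← ha]; simp) hd1
      · exact Polynomial.natDegree_pos_iff_degree_pos.mp h0
    have hne : Pd b l1 ≠ 0 := fun h0 => by simp [h0] at hdeg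
    obtain ⟨d0, hd0⟩ := Complex.exists_root hdeg
    have hd0' : ev2 b d0 l1 = 0 := by rw [← eval_Pd]; exact hd0
    -- step 1 : the whole row at d0 vanishes
    have hrow : ∀ m : ℂ, ev2 b d0 m = 0 := by
      have hSfin : {m : ℂ | ev2 b d0 m ≠ 0}.Finite := by
        by_contra hS
        have hS' : {m : ℂ | ev2 b d0 m ≠ 0}.Infinite := hS
        have himg : ((fun m => d0 + m) '' {m : ℂ | ev2 b d0 m ≠ 0}).Infinite :=
          (Set.infinite_image_iff (Set.injOn_of_injective (add_right_injective d0))).mpr hS'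
        apply hne
        apply Polynomial.eq_zero_of_infinite_isRoot
        refine Set.Infinite.mono ?_ himg
        rintro x ⟨m, hm, rfl⟩
        have hmul := h d0 l1 m
        rw [hd0', mul_zero] at hmul
        have : ev2 b (d0 + m) l1 = 0 :=
          by rcases mul_eq_zero.mp hmul.symm with h' | h' <;> [exact h'; exact absurd h' hm]
        show (Pd b l1).eval (d0 + m) = 0
        rw [eval_Pd]; exact this
      have hQ : Ql b d0 = 0 := by
        apply Polynomial.eq_zero_of_infinite_isRoot
        refine Set.Infinite.mono ?_ hSfin.infinite_compl
        intro m hm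
        show (Ql b d0).eval m = 0
        rw [eval_Ql]
        simpa using hm
      intro m
      rw [← eval_Ql, hQ, Polynomial.eval_zero]
    -- step 2 : for every m, either the column at m vanishes or the row at d0 - m vanishes
    have hstep : ∀ m : ℂ, (Pd b m = 0) ∨ (Ql b (d0 - m) = 0) := by
      intro m
      set F : Polynomial ℂ := (Pd b m).comp (Polynomial.X + Polynomial.C (d0 - m)) with hF
      have hFeval : ∀ l : ℂ, F.eval l = ev2 b (d0 - m + l) m := by
        intro l
        rw [hF]
        simp [Polynomial.eval_comp, eval_Pd]
        rw [show l + (d0 - m) = d0 - m + l by ring]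
      have hprod : ∀ l : ℂ, F.eval l * (Ql b (d0 - m)).eval l = 0 := by
        intro l
        have hmul := h (d0 - m) l m
        rw [show d0 - m + m = d0 by ring, hrow l, zero_mul] at hmul
        rw [hFeval, eval_Ql]
        exact hmul
      have hFG : F * Ql b (d0 - m) = 0 := by
        apply Polynomial.funext
        intro r
        simpa using hprod r
      rcases mul_eq_zero.mp hFG with h0 | h0
      · left
        apply Polynomial.funext
        intro r
        have := hFeval (r - (d0 - m))
        rw [h0] at this
        simp at this
        simp [eval_Pd, ← this]
      · right; exact h0
    -- step 3 : derive a contradiction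
    rcases Set.finite_or_infinite {x : ℂ | Ql b x = 0} with hB | hB
    · -- then columns vanish for all but finitely many m, so all slices Ql vanish
      have hAinf : {m : ℂ | Pd b m = 0}.Infinite := by
        have hpre : {m : ℂ | Ql b (d0 - m) = 0}.Finite := by
          have : {m : ℂ | Ql b (d0 - m) = 0} = (fun m => d0 - m) ⁻¹' {x | Ql b x = 0} := rfl
          rw [this]
          exact Set.Finite.preimage (Set.injOn_of_injective sub_right_injective) hB
        refine Set.Infinite.mono ?_ hpre.infinite_compl
        intro m hm
        rcases hstep m with h' | h'
        · exact h'
        · exact absurd h' hm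
      have hQall : ∀ x : ℂ, Ql b x = 0 := by
        intro x
        apply Polynomial.eq_zero_of_infinite_isRoot
        refine Set.Infinite.mono ?_ hAinf
        intro m hm
        show (Ql b x).eval m = 0
        rw [eval_Ql, ← eval_Pd, hm, Polynomial.eval_zero]
      apply hne
      apply Polynomial.funext
      intro x
      rw [eval_Pd, ← eval_Ql, hQall x]
      simp
    · -- infinitely many zero rows ⇒ Pd b l1 has infinitely many roots
      apply hne
      apply Polynomial.eq_zero_of_infinite_isRoot
      refine Set.Infinite.mono ?_ hB
      intro x hx
      show (Pd b l1).eval x = 0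
      rw [eval_Pd, ← eval_Ql, hx, Polynomial.eval_zero]
  refine ⟨Ql b 0, fun d l => ?_⟩
  rw [key d l, ← eval_Ql]
end

section
/- Let f ∈ ℂ[∂,λ] satisfy (∂+2λ+2μ)·f(−λ−μ, λ) + (∂+2μ)·f(∂+μ, λ) = (∂+λ+2μ)·f(∂,λ) for all ∂, λ, μ ∈ ℂ. Then f is linear in ∂: there exist f₀, f₁ ∈ ℂ[λ] with f(∂,λ) = f₀(λ) + f₁(λ)·∂. -/
open Polynomial

lemma ev2_aeval (f : MvPolynomial (Fin 2) ℂ) (p : Polynomial ℂ) (l : ℂ) :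
    (MvPolynomial.aeval ![p, Polynomial.X] f).eval l = ev2 f (p.eval l) l := by
  rw [ev2]
  induction f using MvPolynomial.induction_on with
  | C a => simp
  | add q r hq hr => simp [hq, hr]
  | mul_X q i hq =>
      simp only [map_mul, Polynomial.eval_mul, hq, MvPolynomial.eval_mul, MvPolynomial.eval_X]
      congr 1
      fin_cases i <;> simp

theorem stmt5 (f : MvPolynomial (Fin 2) ℂ)
    (h : ∀ d l m : ℂ, (d + 2 * l + 2 * m) * ev2 f (-l - m) l
      + (d + 2 * m) * ev2 f (d + m) l = (d + l + 2 * m) * ev2 f d l) :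
    ∃ f₀ f₁ : Polynomial ℂ, ∀ d l : ℂ, ev2 f d l = f₀.eval l + f₁.eval l * d := by
  have h0 : ∀ d l : ℂ, l * ev2 f d l = (d + 2 * l) * ev2 f (-l) l := by
    intro d l
    have H := h d l 0
    simp only [mul_zero, add_zero, sub_zero] at H
    linear_combination (-1 : ℂ) * H
  refine ⟨MvPolynomial.aeval ![0, Polynomial.X] f,
    MvPolynomial.aeval ![1, Polynomial.X] f - MvPolynomial.aeval ![0, Polynomial.X] f, ?_⟩
  intro d l
  set Q : Polynomial ℂ := MvPolynomial.aeval ![Polynomial.C d, Polynomial.X] f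
      - (MvPolynomial.aeval ![0, Polynomial.X] f
        + (MvPolynomial.aeval ![1, Polynomial.X] f
          - MvPolynomial.aeval ![0, Polynomial.X] f) * Polynomial.C d) with hQdef
  have hQeval : ∀ x : ℂ, Q.eval x
      = ev2 f d x - (ev2 f 0 x + (ev2 f 1 x - ev2 f 0 x) * d) := by
    intro x
    have e0 := ev2_aeval f 0 x
    have e1 := ev2_aeval f 1 x
    have ed := ev2_aeval f (Polynomial.C d) x
    simp only [Polynomial.eval_zero, Polynomial.eval_one, Polynomial.eval_C] at e0 e1 ed
    simp [hQdef, e0, e1, ed]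
  have hQ0 : Q = 0 := by
    apply Polynomial.eq_zero_of_infinite_isRoot
    apply Set.Infinite.mono (s := {x : ℂ | x ≠ 0})
    · intro x hx
      have hx' : (x : ℂ) ≠ 0 := hx
      have A := h0 d x
      have B := h0 0 x
      have C := h0 1 x
      show Q.IsRoot x
      rw [Polynomial.IsRoot, hQeval x]
      have key : x * (ev2 f d x - (ev2 f 0 x + (ev2 f 1 x - ev2 f 0 x) * d)) = 0 := by
        linear_combination A - B - d * C + d * B
      rcases mul_eq_zero.mp key with h' | h'
      · exact absurd h' hx'
      · exact h'
    · exact Set.infinite_of_finite_compl (by simp)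
  have := hQeval l
  rw [hQ0] at this
  simp only [Polynomial.eval_zero] at this
  have e0 := ev2_aeval f 0 l
  have e1 := ev2_aeval f 1 l
  simp only [Polynomial.eval_zero, Polynomial.eval_one] at e0 e1
  rw [Polynomial.eval_sub, e0, e1]
  linear_combination -this
end

section
/- Let f ∈ ℂ[∂,λ] satisfy (λ+μ)·f(−λ−μ, λ) + (∂+μ)·f(∂+μ, λ) = (∂+λ+2μ)·f(∂,λ) for all ∂, λ, μ ∈ ℂ. Then f does not depend on ∂, i.e., f(∂,λ) = f₀(λ) for some f₀ ∈ ℂ[λ]. -/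
open Polynomial

lemma evkey (f : MvPolynomial (Fin 2) ℂ) (g : Fin 2 → Polynomial ℂ) (l : ℂ) :
    Polynomial.eval l (MvPolynomial.aeval g f)
      = MvPolynomial.eval (fun i => Polynomial.eval l (g i)) f := by
  have := MvPolynomial.comp_aeval_apply (f := g) (Polynomial.aeval l) f
  simp only [Polynomial.coe_aeval_eq_eval] at this
  rw [this, ← MvPolynomial.coe_aeval_eq_eval]
  rfl

theorem stmt6 (f : MvPolynomial (Fin 2) ℂ)
    (h : ∀ d l m : ℂ, (l + m) * ev2 f (-l - m) l
      + (d + m) * ev2 f (d + m) l = (d + l + 2 * m) * ev2 f d l) :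
    ∃ f₀ : Polynomial ℂ, ∀ d l : ℂ, ev2 f d l = f₀.eval l := by
  refine ⟨MvPolynomial.aeval ![-Polynomial.X, Polynomial.X] f, fun d l => ?_⟩
  have hf₀ : ∀ l : ℂ, Polynomial.eval l (MvPolynomial.aeval ![-Polynomial.X, Polynomial.X] f)
      = ev2 f (-l) l := by
    intro l
    rw [evkey]
    unfold ev2
    have hfun : (fun i => Polynomial.eval l (![-Polynomial.X, Polynomial.X] i)) = ![-l, l] := by
      funext i; fin_cases i <;> simp
    rw [hfun]
  have key : ∀ d l : ℂ, l ≠ 0 → ev2 f d l = ev2 f (-l) l := by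
    intro d l hl
    have := h d l 0
    simp only [add_zero, mul_zero, neg_sub] at this
    have h2 : l * ev2 f (-l - 0) l = l * ev2 f d l := by linear_combination this
    have h3 : ev2 f (-l - 0) l = ev2 f d l := mul_left_cancel₀ hl h2
    rw [← h3]; norm_num
  set q : Polynomial ℂ := MvPolynomial.aeval ![Polynomial.C d, Polynomial.X] f
      - MvPolynomial.aeval ![-Polynomial.X, Polynomial.X] f with hq
  have hqev : ∀ l : ℂ, q.eval l = ev2 f d l - ev2 f (-l) l := by
    intro l
    rw [hq, Polynomial.eval_sub, hf₀, evkey]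
    unfold ev2
    have hfun : (fun i => Polynomial.eval l (![Polynomial.C d, Polynomial.X] i)) = ![d, l] := by
      funext i; fin_cases i <;> simp
    rw [hfun]
  have hq0 : q = 0 := by
    apply Polynomial.eq_zero_of_infinite_isRoot
    apply Set.Infinite.mono (s := ({0}ᶜ : Set ℂ))
    · intro x hx
      simp only [Set.mem_setOf_eq, Polynomial.IsRoot, hqev]
      have := key d x (by simpa using hx)
      linear_combination this
    · exact (Set.finite_singleton 0).infinite_compl
  have := hqev l
  rw [hq0, Polynomial.eval_zero] at this
  rw [hf₀]
  linear_combination -this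
end

section
/- Let β, C₁ ∈ ℂ and let e ∈ ℂ[∂] be a polynomial satisfying (∂+λ)·e(∂+λ) = (∂ + (2β−1)λ + 2C₁)·e(∂) for all ∂, λ ∈ ℂ. Then e is a constant polynomial; moreover, if e ≠ 0 then β = 1 and C₁ = 0. -/
open Polynomial

theorem stmt8 (β C₁ : ℂ) (e : Polynomial ℂ)
    (h : ∀ d l : ℂ, (d + l) * e.eval (d + l) = (d + (2 * β - 1) * l + 2 * C₁) * e.eval d) :
    (∃ c : ℂ, e = Polynomial.C c) ∧ (e ≠ 0 → β = 1 ∧ C₁ = 0) := by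
  have key : X * e = C ((2 * β - 1) * e.eval 0) * X + C (2 * C₁ * e.eval 0) := by
    apply Polynomial.funext
    intro x
    have hx := h 0 x
    simp only [zero_add] at hx
    simp [eval_mul, eval_add]
    linear_combination hx
  have hconst : ∃ c : ℂ, e = Polynomial.C c := by
    by_cases he : e = 0
    · exact ⟨0, by simp [he]⟩
    · have hdeg : (X * e).natDegree ≤ 1 := by
        rw [key]
        apply le_trans (natDegree_add_le _ _)
        apply max_le
        · exact le_trans (natDegree_C_mul_le _ _) (by simp)
        · exact le_trans (natDegree_C _).le (by norm_num)
      rw [natDegree_mul X_ne_zero he, natDegree_X] at hdeg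
      have hn : e.natDegree = 0 := by omega
      exact ⟨e.coeff 0, (Polynomial.eq_C_of_natDegree_eq_zero hn)⟩
  refine ⟨hconst, fun hne => ?_⟩
  obtain ⟨c, rfl⟩ := hconst
  have hc : c ≠ 0 := fun hc0 => hne (by simp [hc0])
  have h1 := h 0 0
  have h2 := h 0 1
  rw [eval_C, eval_C] at h1
  rw [eval_C, eval_C] at h2
  have hC1 : 2 * C₁ * c = 0 := by linear_combination -h1
  have hC₁ : C₁ = 0 := by
    rcases mul_eq_zero.mp hC1 with h' | h'
    · rcases mul_eq_zero.mp h' with h'' | h''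
      · norm_num at h''
      · exact h''
    · exact absurd h' hc
  refine ⟨?_, hC₁⟩
  rw [hC₁] at h2
  have hb : (2 * β - 2) * c = 0 := by linear_combination -h2
  rcases mul_eq_zero.mp hb with h' | h'
  · linear_combination h' / 2
  · exact absurd h' hc
end

section
/- Let f ∈ ℂ[∂,λ] satisfy (∂+λ+ν+2μ)·f(−λ−ν, λ) = (λ−ν)·f(∂+λ+ν, μ) for all ∂, λ, μ, ν ∈ ℂ. Then there exists a constant C ∈ ℂ such that f(∂,λ) = C·(∂+2λ). -/
open Polynomial

theorem stmt9 (f : MvPolynomial (Fin 2) ℂ)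
    (h : ∀ d l m n : ℂ, (d + l + n + 2 * m) * ev2 f (-l - n) l
      = (l - n) * ev2 f (d + l + n) m) :
    ∃ C : ℂ, ∀ d l : ℂ, ev2 f d l = C * (d + 2 * l) := by
  refine ⟨ev2 f (-1) 1, fun d l => ?_⟩
  have h1 := h (d - 1) 1 l 0
  have e1 : (-1 : ℂ) - 0 = -1 := by ring
  have e2 : d - 1 + 1 + 0 = d := by ring
  rw [e1, e2] at h1
  linear_combination -h1
end

section
/- Let g ∈ ℂ[∂,λ] satisfy (λ+ν)·(∂+λ+ν+2μ)·g(−λ−ν, λ) = (λ−ν)·(∂+λ+ν)·g(∂+λ+ν, μ) for all ∂, λ, μ, ν ∈ ℂ. Then g = 0. -/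
open Polynomial

theorem stmt10 (g : MvPolynomial (Fin 2) ℂ)
    (h : ∀ d l m n : ℂ, (l + n) * (d + l + n + 2 * m) * ev2 g (-l - n) l
      = (l - n) * (d + l + n) * ev2 g (d + l + n) m) :
    g = 0 := by
  -- From h with l = 1, n = -1 : 0 = 2 * d * ev2 g d m
  have key : ∀ d m : ℂ, d ≠ 0 → ev2 g d m = 0 := by
    intro d m hd
    have := h d 1 m (-1)
    simp only [add_neg_cancel, zero_mul] at this
    have h2 : (1 - (-1 : ℂ)) * (d + 1 + -1) = 2 * d := by ring
    rw [show d + 1 + -1 = d by ring] at this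
    have := this.symm
    rw [show (1 - (-1 : ℂ)) * d = 2 * d by ring] at this
    have h2d : (2 : ℂ) * d ≠ 0 := by
      simp [hd]
    exact (mul_eq_zero.mp this).resolve_left h2d
  -- Now show all evaluations vanish, including first coordinate 0, via polynomials
  have all : ∀ x y : ℂ, ev2 g x y = 0 := by
    intro x y
    set p : Polynomial ℂ := MvPolynomial.eval₂ Polynomial.C ![Polynomial.X, Polynomial.C y] g with hp
    have hev : ∀ x : ℂ, p.eval x = ev2 g x y := by
      intro x
      have := MvPolynomial.eval₂_comp_left (Polynomial.evalRingHom x)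
        (Polynomial.C : ℂ →+* Polynomial ℂ) ![Polynomial.X, Polynomial.C y] g
      simp only [Polynomial.coe_evalRingHom] at this
      rw [← hp] at this
      rw [this, ev2]
      congr 1
      · ext z; simp
      · funext i; fin_cases i <;> simp
    have hroots : {z : ℂ | p.IsRoot z}.Infinite := by
      apply Set.Infinite.mono (s := {z : ℂ | z ≠ 0})
      · intro z hz
        simp only [Set.mem_setOf_eq, Polynomial.IsRoot]
        rw [hev z]
        exact key z y hz
      · exact Set.Finite.infinite_compl (Set.finite_singleton (0:ℂ))
    have hp0 : p = 0 := Polynomial.eq_zero_of_infinite_isRoot p hroots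
    rw [← hev x, hp0, Polynomial.eval_zero]
  apply MvPolynomial.funext
  intro x
  have := all (x 0) (x 1)
  rw [ev2] at this
  rw [map_zero]
  have hx : x = ![x 0, x 1] := by funext i; fin_cases i <;> simp
  rw [hx]; exact this
end

section
/- Let β, γ ∈ ℂ and let h₁ ∈ ℂ[λ] be a polynomial satisfying ((β−1)∂ + β(λ+ν) − γ)·h₁(λ) = (∂ + β(λ+ν) + γ)·h₁(μ) for all ∂, λ, μ, ν ∈ ℂ. If (β, γ) ≠ (2, 0), then h₁ = 0; if β = 2 and γ = 0, then h₁ is a constant polynomial. -/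
open Polynomial

theorem stmt11 (β γ : ℂ) (h₁ : Polynomial ℂ)
    (h : ∀ d l m n : ℂ, ((β - 1) * d + β * (l + n) - γ) * h₁.eval l
      = (d + β * (l + n) + γ) * h₁.eval m) :
    ((β, γ) ≠ (2, 0) → h₁ = 0) ∧ (β = 2 ∧ γ = 0 → ∃ c : ℂ, h₁ = Polynomial.C c) := by
  have key : ∀ l m : ℂ, (β - 1) * h₁.eval l = h₁.eval m := by
    intro l m
    have h1 := h 1 l m 0
    have h0 := h 0 l m 0
    linear_combination h1 - h0
  have hconst : ∀ l m : ℂ, h₁.eval m = h₁.eval l := by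
    intro l m
    by_cases hb : β = 2
    · subst hb
      linear_combination -(key l m)
    · have hl : h₁.eval l = 0 := by
        have k := key l l
        have : (β - 2) * h₁.eval l = 0 := by linear_combination k
        rcases mul_eq_zero.1 this with h' | h'
        · exact absurd (by linear_combination h') hb
        · exact h'
      have hm : h₁.eval m = 0 := by
        have k := key m m
        have : (β - 2) * h₁.eval m = 0 := by linear_combination k
        rcases mul_eq_zero.1 this with h' | h'
        · exact absurd (by linear_combination h') hb
        · exact h'
      rw [hl, hm]
  constructor
  · intro hne
    apply Polynomial.funext
    intro x
    simp only [eval_zero]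
    by_cases hb : β = 2
    · -- then γ ≠ 0
      have hg : γ ≠ 0 := by
        intro hg
        exact hne (by rw [hb, hg])
      have h0 := h 0 0 0 0
      have : 2 * γ * h₁.eval 0 = 0 := by linear_combination -h0
      have hc0 : h₁.eval 0 = 0 := by
        rcases mul_eq_zero.1 this with h' | h'
        · rcases mul_eq_zero.1 h' with h'' | h''
          · norm_num at h''
          · exact absurd h'' hg
        · exact h'
      rw [hconst 0 x, hc0]
    · have k := key x x
      have : (β - 2) * h₁.eval x = 0 := by linear_combination k
      rcases mul_eq_zero.1 this with h' | h'
      · exact absurd (by linear_combination h') hb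
      · exact h'
  · rintro ⟨hb, hg⟩
    refine ⟨h₁.eval 0, Polynomial.funext fun x => ?_⟩
    rw [eval_C]
    exact hconst 0 x
end

section
/- Let g ∈ ℂ[∂] be a polynomial satisfying (∂+2λ)·g(∂) = (∂+λ)·g(∂+λ) + λ·g(−λ) for all ∂, λ ∈ ℂ. Then g is linear: there exist g₀, g₁ ∈ ℂ with g(∂) = g₀ + g₁·∂. -/
open Polynomial

theorem stmt13 (g : Polynomial ℂ)
    (h : ∀ d l : ℂ, (d + 2 * l) * g.eval d = (d + l) * g.eval (d + l) + l * g.eval (-l)) :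
    ∃ g₀ g₁ : ℂ, ∀ d : ℂ, g.eval d = g₀ + g₁ * d := by
  have key : ∀ d : ℂ, d + 2 ≠ 0 →
      g.eval d + g.eval (d + 2) = 2 * g.eval (d + 1) := by
    intro d hd
    have h1 := h d 1
    have h2 := h (d + 1) 1
    have e1 : d + 1 + 1 = d + 2 := by ring
    rw [e1] at h2
    apply mul_left_cancel₀ hd
    linear_combination h1 - h2
  set a := g.eval 0 with ha
  set b := g.eval 1 - g.eval 0 with hb
  have hn : ∀ k : ℕ, g.eval (k : ℂ) = a + b * k := by
    intro k
    induction k using Nat.twoStepInduction with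
    | zero => simp [ha]
    | one => push_cast; rw [hb, ha]; ring
    | more n ih1 ih2 =>
      have hne : ((n : ℂ) + 2) ≠ 0 := by
        have : ((n : ℂ) + 2) = ((n + 2 : ℕ) : ℂ) := by push_cast; ring
        rw [this]
        exact Nat.cast_ne_zero.mpr (by omega)
      have hk := key (n : ℂ) hne
      push_cast at hk ih1 ih2 ⊢
      rw [ih1, ih2] at hk
      linear_combination hk
  have hz : g - (C a + C b * X) = 0 := by
    apply Polynomial.eq_zero_of_infinite_isRoot
    have hsub : Set.range (Nat.cast : ℕ → ℂ) ⊆ {x | (g - (C a + C b * X)).IsRoot x} := by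
      rintro x ⟨k, rfl⟩
      simp [Polynomial.IsRoot, hn k]
    exact (Set.infinite_range_of_injective Nat.cast_injective).mono hsub
  refine ⟨a, b, fun d => ?_⟩
  have := sub_eq_zero.mp hz
  calc g.eval d = (C a + C b * X).eval d := by rw [this]
    _ = a + b * d := by simp
end

section
/- Let b, τ ∈ ℂ with τ ≠ 0, and let h ∈ ℂ[∂,μ] be a polynomial satisfying (b−τ)·h(∂+λ, μ) − b·h(∂,μ) = τ·h(∂, λ+μ) for all ∂, λ, μ ∈ ℂ. Then h = 0. -/
open Polynomial

theorem stmt16 (b τ : ℂ) (hτ : τ ≠ 0) (f : MvPolynomial (Fin 2) ℂ)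
    (h : ∀ d l m : ℂ, (b - τ) * ev2 f (d + l) m - b * ev2 f d m = τ * ev2 f d (l + m)) :
    f = 0 := by
  have key : ∀ d m : ℂ, ev2 f d m = 0 := by
    intro d m
    have h1 : (b - τ) * ev2 f (d + 0) m - b * ev2 f d m = τ * ev2 f d (0 + m) := h d 0 m
    rw [add_zero, zero_add] at h1
    have h2 : (2 * τ) * ev2 f d m = 0 := by linear_combination -h1
    rcases mul_eq_zero.mp h2 with h3 | h3
    · exact absurd h3 (mul_ne_zero two_ne_zero hτ)
    · exact h3
  apply MvPolynomial.funext
  intro x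
  have hx : ![x 0, x 1] = x := by
    funext i; fin_cases i <;> rfl
  have := key (x 0) (x 1)
  rw [ev2, hx] at this
  simpa using this
end

section
/- Let Δ₀, Δ₁, a ∈ ℂ and let h ∈ ℂ[∂,μ] be a nonzero polynomial satisfying (∂ + μ + Δ₀λ + a)·h(∂,μ) − (∂ + Δ₁λ + a)·h(∂+λ, μ) = μ·h(∂, λ+μ) for all ∂, λ, μ ∈ ℂ. Then Δ₀ − Δ₁ ∈ {0, 1, 2, 3}. -/
open Polynomial

private lemma cXm0 (p : ℂ[X]) : (X * p).coeff 0 = 0 := by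
  simp [Polynomial.mul_coeff_zero]
private lemma cXm1 (p : ℂ[X]) : (X * p).coeff 1 = p.coeff 0 := by
  simpa using Polynomial.coeff_X_mul p 0
private lemma cXm2 (p : ℂ[X]) : (X * p).coeff 2 = p.coeff 1 := by
  simpa using Polynomial.coeff_X_mul p 1
private lemma cXm3 (p : ℂ[X]) : (X * p).coeff 3 = p.coeff 2 := by
  simpa using Polynomial.coeff_X_mul p 2

private lemma hhEval (i j : ℕ) (p : ℂ[X]) (x : ℂ) :
    (hasseDeriv i (hasseDeriv j p)).eval x
      = ((i+j).choose i : ℂ) * (hasseDeriv (i+j) p).eval x := by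
  rw [← LinearMap.comp_apply, Polynomial.hasseDeriv_comp]
  simp [nsmul_eq_mul]

private lemma ch2 (n : ℕ) : ((n.choose 2 : ℕ) : ℂ) * 2 = n * (n - 1) := by
  induction n with
  | zero => simp
  | succ k ih =>
    rw [Nat.choose_succ_succ]
    push_cast [Nat.choose_one_right]
    push_cast at ih
    ring_nf
    ring_nf at ih
    linear_combination ih

private lemma ch3 (n : ℕ) : ((n.choose 3 : ℕ) : ℂ) * 6 = n * (n - 1) * (n - 2) := by
  induction n with
  | zero => simp
  | succ k ih =>
    rw [Nat.choose_succ_succ]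
    push_cast
    push_cast at ih
    linear_combination ih + 3 * ch2 k

private lemma ch4 (n : ℕ) : ((n.choose 4 : ℕ) : ℂ) * 24 = n * (n - 1) * (n - 2) * (n - 3) := by
  induction n with
  | zero => simp
  | succ k ih =>
    rw [Nat.choose_succ_succ]
    push_cast
    push_cast at ih
    linear_combination ih + 4 * ch3 k

private lemma ch5 (n : ℕ) : ((n.choose 5 : ℕ) : ℂ) * 120
    = n * (n - 1) * (n - 2) * (n - 3) * (n - 4) := by
  induction n with
  | zero => simp
  | succ k ih =>
    rw [Nat.choose_succ_succ]
    push_cast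
    push_cast at ih
    linear_combination ih + 5 * ch4 k

private lemma coeffExtract (G : ℂ[X]) (α β γ : ℂ) (s : ℕ)
    (hQ : C α * (X * (X * hasseDeriv (s+2) G)) + C β * (X * hasseDeriv (s+1) G)
        + C γ * hasseDeriv s G = 0) (k : ℕ) (hk : s ≤ k) :
    (α * ((k.choose (s+2) : ℕ) : ℂ) + β * ((k.choose (s+1) : ℕ) : ℂ)
      + γ * ((k.choose s : ℕ) : ℂ)) * G.coeff k = 0 := by
  obtain ⟨t, rfl⟩ := Nat.exists_eq_add_of_le hk
  have h := congrArg (fun p => Polynomial.coeff p t) hQ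
  simp only [Polynomial.coeff_add, Polynomial.coeff_C_mul, Polynomial.coeff_zero] at h
  match t with
  | 0 =>
    simp only [cXm0, Polynomial.hasseDeriv_coeff, Nat.zero_add, mul_zero] at h
    rw [show s + 0 = s from rfl]
    rw [Nat.choose_eq_zero_of_lt (by omega), Nat.choose_eq_zero_of_lt (by omega),
      Nat.choose_self]
    push_cast
    push_cast [Nat.choose_self] at h
    linear_combination h
  | 1 =>
    rw [show (1:ℕ) = 0 + 1 from rfl] at h
    simp only [Polynomial.coeff_X_mul, cXm0, Polynomial.hasseDeriv_coeff, mul_zero] at h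
    rw [show s + (0+1) = s + 1 from rfl]
    rw [Nat.choose_eq_zero_of_lt (by omega), Nat.choose_self, Nat.choose_succ_self_right]
    rw [show (0:ℕ) + (s+1) = s + 1 by omega, show (0:ℕ)+1+s = s+1 by omega] at h
    push_cast
    push_cast [Nat.choose_self, Nat.choose_succ_self_right] at h
    linear_combination h
  | (t+2) =>
    rw [show t + 2 = (t + 1) + 1 from rfl] at h
    simp only [Polynomial.coeff_X_mul, Polynomial.hasseDeriv_coeff] at h
    rw [show t+1+(s+1) = s+(t+1+1) by omega, show t+(s+2) = s+(t+1+1) by omega,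
      show t+1+1+s = s+(t+1+1) by omega] at h
    rw [show s + (t+2) = s + (t+1+1) by omega]
    linear_combination h

private lemma n32 : (3:ℕ).choose 2 = 3 := by decide
private lemma n42 : (4:ℕ).choose 2 = 6 := by decide
private lemma n52 : (5:ℕ).choose 2 = 10 := by decide

private lemma rep (f : MvPolynomial (Fin 2) ℂ) :
    ∃ (N : ℕ) (s : ℕ → ℂ[X]), 0 < N ∧ (∀ j, N ≤ j → s j = 0) ∧
      ∀ d m : ℂ, MvPolynomial.eval ![d, m] f
        = ∑ j ∈ Finset.range N, (s j).eval d * m ^ j := by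
  classical
  refine ⟨(f.support.sup fun mo => mo 1) + 1,
    fun j => ∑ mo ∈ f.support.filter (fun mo => mo 1 = j),
      C (MvPolynomial.coeff mo f) * X ^ (mo 0),
    Nat.succ_pos _, ?_, ?_⟩
  · intro j hj
    have hemp : f.support.filter (fun mo => mo 1 = j) = ∅ := by
      rw [Finset.filter_eq_empty_iff]
      intro mo hmo hj'
      have := Finset.le_sup (f := fun mo : Fin 2 →₀ ℕ => mo 1) hmo
      omega
    simp [hemp]
  · intro d m
    rw [MvPolynomial.eval_eq']
    rw [← Finset.sum_fiberwise_of_maps_to (g := fun mo : Fin 2 →₀ ℕ => mo 1)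
      (t := Finset.range ((f.support.sup fun mo => mo 1) + 1)) ?_]
    · apply Finset.sum_congr rfl
      intro j _
      rw [Polynomial.eval_finset_sum, Finset.sum_mul]
      apply Finset.sum_congr rfl
      intro mo hmo
      rw [Finset.mem_filter] at hmo
      rw [Fin.prod_univ_two]
      simp [hmo.2, mul_assoc]
    · intro mo hmo
      beta_reduce
      rw [Finset.mem_range]
      have := Finset.le_sup (f := fun mo : Fin 2 →₀ ℕ => mo 1) hmo
      omega

theorem stmt17 (Δ₀ Δ₁ a : ℂ) (f : MvPolynomial (Fin 2) ℂ) (hf : f ≠ 0)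
    (h : ∀ d l m : ℂ, (d + m + Δ₀ * l + a) * ev2 f d m
      - (d + Δ₁ * l + a) * ev2 f (d + l) m = m * ev2 f d (l + m)) :
    Δ₀ - Δ₁ ∈ ({0, 1, 2, 3} : Set ℂ) := by
  classical
  obtain ⟨N, s, hNpos, hsupp, hev⟩ := rep f
  have hev : ∀ d m : ℂ, ev2 f d m = ∑ j ∈ Finset.range N, (s j).eval d * m ^ j := hev
  have hnz : ∃ d m : ℂ, ev2 f d m ≠ 0 := by
    by_contra hc
    push_neg at hc
    apply hf
    apply MvPolynomial.funext
    intro v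
    have h0 := hc (v 0) (v 1)
    have hv : ![v 0, v 1] = v := by
      funext i; fin_cases i <;> rfl
    rw [ev2, hv] at h0
    simpa using h0
  by_cases hp0 : s 0 = 0
  · -- CASE B : s 0 = 0
    have hSc : ∀ (w : ℂ) (k : ℕ),
        (∑ j ∈ Finset.range N, C ((s j).eval w) * X ^ j).coeff k = (s k).eval w := by
      intro w k
      rw [Polynomial.finset_sum_coeff]
      by_cases hk : k < N
      · rw [Finset.sum_eq_single k]
        · simp [Polynomial.coeff_X_pow]
        · intro j _ hj
          simp [Polynomial.coeff_X_pow, Ne.symm hj]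
        · intro hnot; exact absurd (Finset.mem_range.mpr hk) hnot
      · push_neg at hk
        rw [hsupp k hk]
        simp only [Polynomial.eval_zero]
        apply Finset.sum_eq_zero
        intro j hj
        have hkj : k ≠ j := by rw [Finset.mem_range] at hj; omega
        simp [Polynomial.coeff_X_pow, hkj]
    have hR : ∀ d mm : ℂ, ev2 f d mm
        = (d + a + Δ₀*mm) * (s 1).eval d - (d + a + Δ₁*mm) * (s 1).eval (d + mm) := by
      intro d l
      have hW0 : (C (d+a+Δ₀*l) * (∑ j ∈ Finset.range N, C ((s j).eval d) * X ^ j)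
          + X * (∑ j ∈ Finset.range N, C ((s j).eval d) * X ^ j)
          - C (d+a+Δ₁*l) * (∑ j ∈ Finset.range N, C ((s j).eval (d+l)) * X ^ j)
          - X * (∑ j ∈ Finset.range N, C ((s j).eval d) * (C l + X) ^ j) : ℂ[X]) = 0 := by
        apply Polynomial.zero_of_eval_zero
        intro mm
        simp only [eval_sub, eval_add, eval_mul, eval_C, eval_X, Polynomial.eval_finset_sum,
          eval_pow]
        rw [← hev, ← hev, ← hev]
        linear_combination h d l mm
      have hS3 : (∑ j ∈ Finset.range N, C ((s j).eval d) * (C l + X) ^ j).coeff 0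
          = ev2 f d l := by
        rw [Polynomial.finset_sum_coeff, hev d l]
        apply Finset.sum_congr rfl
        intro j _
        rw [Polynomial.coeff_zero_eq_eval_zero]
        simp
      have h1 := congrArg (fun p => Polynomial.coeff p 1) hW0
      simp only [Polynomial.coeff_zero, coeff_add, coeff_sub, coeff_C_mul, cXm1, hSc, hS3, hp0,
        Polynomial.eval_zero] at h1
      linear_combination -h1
    have hp1 : s 1 ≠ 0 := by
      intro h1z
      obtain ⟨d, mm, hne⟩ := hnz
      exact hne (by rw [hR, h1z]; simp)
    set G : ℂ[X] := taylor (-a) (s 1) with hGdef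
    have hGne : G ≠ 0 := by
      intro h0
      apply hp1
      have h1 := congrArg (taylor a) h0
      rwa [taylor_taylor, add_neg_cancel, taylor_zero, map_zero] at h1
    have hpG : ∀ y : ℂ, (s 1).eval y = G.eval (y + a) := by
      intro y; rw [hGdef, taylor_eval]; congr 1; ring
    have hΦ : ∀ x l mm : ℂ,
        (x+mm+Δ₀*l) * ((x+Δ₀*mm) * G.eval x - (x+Δ₁*mm) * G.eval (mm+x))
        - (x+Δ₁*l) * ((x+l+Δ₀*mm) * G.eval (l+x) - (x+l+Δ₁*mm) * G.eval (mm+(l+x)))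
        - mm * ((x+Δ₀*(l+mm)) * G.eval x - (x+Δ₁*(l+mm)) * G.eval (mm+(l+x))) = 0 := by
      intro x l mm
      have h0 := h (x - a) l mm
      rw [hR (x-a) mm, hR (x-a+l) mm, hR (x-a) (l+mm)] at h0
      simp only [hpG] at h0
      rw [show x - a + a = x by ring, show x - a + mm + a = mm + x by ring,
        show x - a + l + a = l + x by ring, show x - a + l + mm + a = mm + (l + x) by ring,
        show x - a + (l + mm) + a = mm + (l + x) by ring] at h0
      linear_combination h0
    have hW : ∀ x l : ℂ,
        (C (G.eval x * (x*x + Δ₀*l*x)) + C (G.eval x * (Δ₀*x + Δ₀*(Δ₀-1)*l)) * X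
         - (C (x*(x+Δ₀*l)) * taylor x G + C (Δ₁*(x+Δ₀*l) + x) * (X * taylor x G)
            + C Δ₁ * (X * (X * taylor x G)))
         - (C (G.eval (l+x) * ((x+Δ₁*l)*(x+l))) + C (G.eval (l+x) * ((x+Δ₁*l)*Δ₀)) * X)
         + (C ((x+Δ₁*l)*(x+l)) * taylor (l+x) G + C ((Δ₁+1)*(x+Δ₁*l)) * (X * taylor (l+x) G)
            + C Δ₁ * (X * (X * taylor (l+x) G))) : ℂ[X]) = 0 := by
      intro x l
      apply Polynomial.zero_of_eval_zero
      intro mm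
      simp only [eval_add, eval_sub, eval_mul, eval_C, eval_X, taylor_eval]
      linear_combination hΦ x l mm
    have hD1 : ∀ x l : ℂ,
        G.eval x * (Δ₀*x + Δ₀*(Δ₀-1)*l)
        - (x*(x+Δ₀*l) * (hasseDeriv 1 G).eval x + (Δ₁*(x+Δ₀*l) + x) * G.eval x)
        - G.eval (l+x) * ((x+Δ₁*l)*Δ₀)
        + ((x+Δ₁*l)*(x+l) * (hasseDeriv 1 G).eval (l+x)
           + (Δ₁+1)*(x+Δ₁*l) * G.eval (l+x)) = 0 := by
      intro x l
      have h1 := congrArg (fun p => Polynomial.coeff p 1) (hW x l)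
      simp only [Polynomial.coeff_zero, coeff_add, coeff_sub, coeff_C_mul, Polynomial.coeff_C, cXm1, cXm0,
        Polynomial.coeff_X_one, Polynomial.taylor_coeff, Polynomial.hasseDeriv_zero',
        mul_one, mul_zero, add_zero, zero_add, one_ne_zero, if_false] at h1
      linear_combination h1
    have hD2 : ∀ x l : ℂ,
        -(x*(x+Δ₀*l) * (hasseDeriv 2 G).eval x + (Δ₁*(x+Δ₀*l) + x) * (hasseDeriv 1 G).eval x
          + Δ₁ * G.eval x)
        + ((x+Δ₁*l)*(x+l) * (hasseDeriv 2 G).eval (l+x)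
           + (Δ₁+1)*(x+Δ₁*l) * (hasseDeriv 1 G).eval (l+x) + Δ₁ * G.eval (l+x)) = 0 := by
      intro x l
      have h1 := congrArg (fun p => Polynomial.coeff p 2) (hW x l)
      simp only [Polynomial.coeff_zero, coeff_add, coeff_sub, coeff_C_mul, Polynomial.coeff_C, cXm2, cXm1, cXm0,
        Polynomial.coeff_X, Polynomial.taylor_coeff, Polynomial.hasseDeriv_zero'] at h1
      norm_num [-Polynomial.hasseDeriv_one] at h1
      linear_combination h1
    have hD3 : ∀ x l : ℂ,
        -(x*(x+Δ₀*l) * (hasseDeriv 3 G).eval x + (Δ₁*(x+Δ₀*l) + x) * (hasseDeriv 2 G).eval x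
          + Δ₁ * (hasseDeriv 1 G).eval x)
        + ((x+Δ₁*l)*(x+l) * (hasseDeriv 3 G).eval (l+x)
           + (Δ₁+1)*(x+Δ₁*l) * (hasseDeriv 2 G).eval (l+x)
           + Δ₁ * (hasseDeriv 1 G).eval (l+x)) = 0 := by
      intro x l
      have h1 := congrArg (fun p => Polynomial.coeff p 3) (hW x l)
      simp only [Polynomial.coeff_zero, coeff_add, coeff_sub, coeff_C_mul, Polynomial.coeff_C, cXm3, cXm2, cXm1, cXm0,
        Polynomial.coeff_X, Polynomial.taylor_coeff, Polynomial.hasseDeriv_zero'] at h1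
      norm_num [-Polynomial.hasseDeriv_one] at h1
      linear_combination h1
    have hV1 : ∀ x : ℂ,
        (C (G.eval x*Δ₀*x) + C (G.eval x*Δ₀*(Δ₀-1)) * X
         + C (-(x*x*(hasseDeriv 1 G).eval x)) + C (-(Δ₀*x*(hasseDeriv 1 G).eval x)) * X
         + C (-((Δ₁*x+x) * G.eval x)) + C (-(Δ₁*Δ₀*G.eval x)) * X
         - (C (Δ₀*x) * taylor x G + C (Δ₀*Δ₁) * (X * taylor x G))
         + (C (x*x) * taylor x (hasseDeriv 1 G) + C ((Δ₁+1)*x) * (X * taylor x (hasseDeriv 1 G))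
            + C Δ₁ * (X * (X * taylor x (hasseDeriv 1 G))))
         + (C ((Δ₁+1)*x) * taylor x G + C ((Δ₁+1)*Δ₁) * (X * taylor x G)) : ℂ[X]) = 0 := by
      intro x
      apply Polynomial.zero_of_eval_zero
      intro l
      simp only [eval_add, eval_sub, eval_mul, eval_C, eval_X, taylor_eval]
      linear_combination hD1 x l
    have hV2 : ∀ x : ℂ,
        (C (-(x*x*(hasseDeriv 2 G).eval x)) + C (-(Δ₀*x*(hasseDeriv 2 G).eval x)) * X
         + C (-((Δ₁*x+x) * (hasseDeriv 1 G).eval x)) + C (-(Δ₁*Δ₀*(hasseDeriv 1 G).eval x)) * X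
         + C (-(Δ₁ * G.eval x))
         + (C (x*x) * taylor x (hasseDeriv 2 G) + C ((Δ₁+1)*x) * (X * taylor x (hasseDeriv 2 G))
            + C Δ₁ * (X * (X * taylor x (hasseDeriv 2 G))))
         + (C ((Δ₁+1)*x) * taylor x (hasseDeriv 1 G)
            + C ((Δ₁+1)*Δ₁) * (X * taylor x (hasseDeriv 1 G)))
         + C Δ₁ * taylor x G : ℂ[X]) = 0 := by
      intro x
      apply Polynomial.zero_of_eval_zero
      intro l
      simp only [eval_add, eval_sub, eval_mul, eval_C, eval_X, taylor_eval]
      linear_combination hD2 x l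
    have hV3 : ∀ x : ℂ,
        (C (-(x*x*(hasseDeriv 3 G).eval x)) + C (-(Δ₀*x*(hasseDeriv 3 G).eval x)) * X
         + C (-((Δ₁*x+x) * (hasseDeriv 2 G).eval x)) + C (-(Δ₁*Δ₀*(hasseDeriv 2 G).eval x)) * X
         + C (-(Δ₁ * (hasseDeriv 1 G).eval x))
         + (C (x*x) * taylor x (hasseDeriv 3 G) + C ((Δ₁+1)*x) * (X * taylor x (hasseDeriv 3 G))
            + C Δ₁ * (X * (X * taylor x (hasseDeriv 3 G))))
         + (C ((Δ₁+1)*x) * taylor x (hasseDeriv 2 G)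
            + C ((Δ₁+1)*Δ₁) * (X * taylor x (hasseDeriv 2 G)))
         + C Δ₁ * taylor x (hasseDeriv 1 G) : ℂ[X]) = 0 := by
      intro x
      apply Polynomial.zero_of_eval_zero
      intro l
      simp only [eval_add, eval_sub, eval_mul, eval_C, eval_X, taylor_eval]
      linear_combination hD3 x l
    have hQ11 : C (2:ℂ) * (X * (X * hasseDeriv 2 G))
        + C (2*(1-(Δ₀-Δ₁))) * (X * hasseDeriv 1 G)
        + C ((Δ₀-Δ₁)^2 - (Δ₀-Δ₁)) * hasseDeriv 0 G = 0 := by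
      apply Polynomial.zero_of_eval_zero
      intro x
      have h1 := congrArg (fun p => Polynomial.coeff p 1) (hV1 x)
      simp only [Polynomial.coeff_zero, coeff_add, coeff_sub, coeff_C_mul, Polynomial.coeff_C, cXm2, cXm1, cXm0,
        Polynomial.coeff_X_one, Polynomial.taylor_coeff, hhEval,
        Polynomial.hasseDeriv_zero', mul_one] at h1
      norm_num [-Polynomial.hasseDeriv_one, Nat.choose_one_right] at h1
      simp only [eval_add, eval_mul, eval_C, eval_X, Polynomial.hasseDeriv_zero']
      norm_num [-Polynomial.hasseDeriv_one]
      linear_combination h1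
    have hQ22 : C (6:ℂ) * (X * (X * hasseDeriv 4 G))
        + C (6*(Δ₁+1)) * (X * hasseDeriv 3 G)
        + C (2*Δ₁^2+4*Δ₁) * hasseDeriv 2 G = 0 := by
      apply Polynomial.zero_of_eval_zero
      intro x
      have h1 := congrArg (fun p => Polynomial.coeff p 2) (hV2 x)
      simp only [Polynomial.coeff_zero, coeff_add, coeff_sub, coeff_C_mul, Polynomial.coeff_C, cXm2, cXm1, cXm0,
        Polynomial.coeff_X, Polynomial.taylor_coeff, hhEval,
        Polynomial.hasseDeriv_zero'] at h1
      norm_num [-Polynomial.hasseDeriv_one, Nat.choose_one_right, n32, n42, n52] at h1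
      simp only [eval_add, eval_mul, eval_C, eval_X]
      norm_num [-Polynomial.hasseDeriv_one]
      linear_combination h1
    have hQ23 : C (10:ℂ) * (X * (X * hasseDeriv 5 G))
        + C (10*(Δ₁+1)) * (X * hasseDeriv 4 G)
        + C (3*Δ₁^2+7*Δ₁) * hasseDeriv 3 G = 0 := by
      apply Polynomial.zero_of_eval_zero
      intro x
      have h1 := congrArg (fun p => Polynomial.coeff p 2) (hV3 x)
      simp only [Polynomial.coeff_zero, coeff_add, coeff_sub, coeff_C_mul, Polynomial.coeff_C, cXm2, cXm1, cXm0,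
        Polynomial.coeff_X, Polynomial.taylor_coeff, hhEval,
        Polynomial.hasseDeriv_zero'] at h1
      norm_num [-Polynomial.hasseDeriv_one, Nat.choose_one_right, n32, n42, n52] at h1
      simp only [eval_add, eval_mul, eval_C, eval_X]
      norm_num [-Polynomial.hasseDeriv_one]
      linear_combination h1
    set n := G.natDegree with hndef
    have hGn : G.coeff n ≠ 0 := by
      have hlc : G.leadingCoeff ≠ 0 := Polynomial.leadingCoeff_ne_zero.mpr hGne
      exact hlc
    have i11 := coeffExtract G 2 (2*(1-(Δ₀-Δ₁))) ((Δ₀-Δ₁)^2 - (Δ₀-Δ₁)) 0 hQ11 n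
      (Nat.zero_le n)
    norm_num [Nat.choose_one_right] at i11
    have hdisj : Δ₀ - Δ₁ = (n:ℂ) ∨ Δ₀ - Δ₁ = (n:ℂ) + 1 := by
      have r11 : 2*((n.choose 2 : ℕ) : ℂ) + 2*(1-(Δ₀-Δ₁))*(n:ℂ)
          + ((Δ₀-Δ₁)^2 - (Δ₀-Δ₁)) = 0 := by
        rcases i11 with h' | h'
        · linear_combination h'
        · exact absurd h' hGn
      have key : ((Δ₀-Δ₁) - (n:ℂ)) * ((Δ₀-Δ₁) - (n:ℂ) - 1) = 0 := by
        linear_combination r11 - ch2 n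
      rcases mul_eq_zero.mp key with hk | hk
      · left; linear_combination hk
      · right; linear_combination hk
    by_cases hn2 : n ≤ 2
    · simp only [Set.mem_insert_iff, Set.mem_singleton_iff]
      rcases hdisj with hδ | hδ <;>
        rcases (by omega : n = 0 ∨ n = 1 ∨ n = 2) with h01 | h01 | h01 <;>
          rw [hδ, h01] <;> norm_num
    · push_neg at hn2
      exfalso
      have i22 := coeffExtract G 6 (6*(Δ₁+1)) (2*Δ₁^2+4*Δ₁) 2 hQ22 n (by omega)
      have i23 := coeffExtract G 10 (10*(Δ₁+1)) (3*Δ₁^2+7*Δ₁) 3 hQ23 n (by omega)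
      norm_num at i22 i23
      have q22 : 6*((n.choose 4 : ℕ) : ℂ) + 6*(Δ₁+1)*((n.choose 3 : ℕ) : ℂ)
          + (2*Δ₁^2+4*Δ₁)*((n.choose 2 : ℕ) : ℂ) = 0 := by
        rcases i22 with h' | h'
        · linear_combination h'
        · exact absurd h' hGn
      have q23 : 10*((n.choose 5 : ℕ) : ℂ) + 10*(Δ₁+1)*((n.choose 4 : ℕ) : ℂ)
          + (3*Δ₁^2+7*Δ₁)*((n.choose 3 : ℕ) : ℂ) = 0 := by
        rcases i23 with h' | h'
        · linear_combination h'
        · exact absurd h' hGn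
      have hm0 : (n:ℂ) ≠ 0 := Nat.cast_ne_zero.mpr (by omega)
      have hm1 : (n:ℂ) - 1 ≠ 0 := by
        intro hh
        have h1 : (n:ℂ) = 1 := by linear_combination hh
        have : n = 1 := by exact_mod_cast h1
        omega
      have hm2 : (n:ℂ) - 2 ≠ 0 := by
        intro hh
        have h1 : (n:ℂ) = 2 := by linear_combination hh
        have : n = 2 := by exact_mod_cast h1
        omega
      have hmp1 : (n:ℂ) + 1 ≠ 0 := by
        have h1 : ((n:ℂ) + 1) = ((n+1 : ℕ) : ℂ) := by push_cast; ring
        rw [h1]; exact Nat.cast_ne_zero.mpr (by omega)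
      have E22 : ((n:ℂ)*((n:ℂ)-1)) * (4*Δ₁^2 + 4*Δ₁*(n:ℂ) + (n:ℂ)^2 - (n:ℂ) - 2) = 0 := by
        linear_combination 4*q22 - ch4 n - 4*(Δ₁+1)*(ch3 n) - (4*Δ₁^2+8*Δ₁)*(ch2 n)
      have E23 : ((n:ℂ)*((n:ℂ)-1)*((n:ℂ)-2))
          * (6*Δ₁^2 + (5*(n:ℂ)-1)*Δ₁ + ((n:ℂ)-3)*((n:ℂ)+1)) = 0 := by
        linear_combination 12*q23 - ch5 n - 5*(Δ₁+1)*(ch4 n) - (6*Δ₁^2+14*Δ₁)*(ch3 n)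
      have q1 : 4*Δ₁^2 + 4*Δ₁*(n:ℂ) + (n:ℂ)^2 - (n:ℂ) - 2 = 0 := by
        rcases mul_eq_zero.mp E22 with h' | h'
        · exact absurd h' (mul_ne_zero hm0 hm1)
        · exact h'
      have q2 : 6*Δ₁^2 + (5*(n:ℂ)-1)*Δ₁ + ((n:ℂ)-3)*((n:ℂ)+1) = 0 := by
        rcases mul_eq_zero.mp E23 with h' | h'
        · exact absurd h' (mul_ne_zero (mul_ne_zero hm0 hm1) hm2)
        · exact h'
      have key : ((n:ℂ)+1) * (2*Δ₁ + (n:ℂ)) = 0 := by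
        linear_combination 3*q1 - 2*q2
      have h2cm : 2*Δ₁ + (n:ℂ) = 0 := by
        rcases mul_eq_zero.mp key with h' | h'
        · exact absurd h' hmp1
        · exact h'
      have key2 : (n:ℂ) + 2 = 0 := by
        linear_combination (2*Δ₁+(n:ℂ))*h2cm - q1
      have h1 : ((n:ℂ) + 2) = ((n+2 : ℕ) : ℂ) := by push_cast; ring
      rw [h1] at key2
      have : n + 2 = 0 := by exact_mod_cast key2
      omega
  · -- CASE A : s 0 ≠ 0
    have hF0 : ∀ d : ℂ, ev2 f d 0 = (s 0).eval d := by
      intro d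
      rw [hev]
      rw [Finset.sum_eq_single 0]
      · norm_num
      · intro j _ hj
        simp [zero_pow hj]
      · intro hnot; exact absurd (Finset.mem_range.mpr hNpos) hnot
    set G : ℂ[X] := taylor (-a) (s 0) with hGdef
    have hGne : G ≠ 0 := by
      intro h0
      apply hp0
      have h1 := congrArg (taylor a) h0
      rwa [taylor_taylor, add_neg_cancel, taylor_zero, map_zero] at h1
    have hpG : ∀ y : ℂ, (s 0).eval y = G.eval (y + a) := by
      intro y; rw [hGdef, taylor_eval]; congr 1; ring
    have hA : ∀ x l : ℂ, (x + Δ₀*l) * G.eval x - (x + Δ₁*l) * G.eval (l + x) = 0 := by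
      intro x l
      have h0 := h (x - a) l 0
      rw [hF0, hF0, hpG, hpG] at h0
      rw [show x - a + a = x by ring, show x - a + l + a = l + x by ring] at h0
      linear_combination h0
    have hVA : ∀ x : ℂ, (C (x * G.eval x) + C (Δ₀ * G.eval x) * X
        - (C x * taylor x G + C Δ₁ * (X * taylor x G)) : ℂ[X]) = 0 := by
      intro x
      apply Polynomial.zero_of_eval_zero
      intro l
      simp only [eval_add, eval_sub, eval_mul, eval_C, eval_X, taylor_eval]
      linear_combination hA x l
    have hQA1 : C (0:ℂ) * (X * (X * hasseDeriv 2 G)) + C (-1:ℂ) * (X * hasseDeriv 1 G)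
        + C (Δ₀ - Δ₁) * hasseDeriv 0 G = 0 := by
      apply Polynomial.zero_of_eval_zero
      intro x
      have h1 := congrArg (fun p => Polynomial.coeff p 1) (hVA x)
      simp only [Polynomial.coeff_zero, coeff_add, coeff_sub, coeff_C_mul, Polynomial.coeff_C, cXm1, cXm0,
        Polynomial.coeff_X_one, Polynomial.taylor_coeff, Polynomial.hasseDeriv_zero',
        mul_one] at h1
      simp only [eval_add, eval_mul, eval_C, eval_X, Polynomial.hasseDeriv_zero']
      norm_num at h1 ⊢
      linear_combination h1
    have hQA2 : C (0:ℂ) * (X * (X * hasseDeriv 3 G)) + C (1:ℂ) * (X * hasseDeriv 2 G)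
        + C Δ₁ * hasseDeriv 1 G = 0 := by
      apply Polynomial.zero_of_eval_zero
      intro x
      have h1 := congrArg (fun p => Polynomial.coeff p 2) (hVA x)
      simp only [Polynomial.coeff_zero, coeff_add, coeff_sub, coeff_C_mul, Polynomial.coeff_C, cXm2, cXm1, cXm0,
        Polynomial.coeff_X, Polynomial.taylor_coeff, Polynomial.hasseDeriv_zero'] at h1
      simp only [eval_add, eval_mul, eval_C, eval_X]
      norm_num at h1 ⊢
      linear_combination -h1
    have hQA3 : C (0:ℂ) * (X * (X * hasseDeriv 4 G)) + C (1:ℂ) * (X * hasseDeriv 3 G)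
        + C Δ₁ * hasseDeriv 2 G = 0 := by
      apply Polynomial.zero_of_eval_zero
      intro x
      have h1 := congrArg (fun p => Polynomial.coeff p 3) (hVA x)
      simp only [Polynomial.coeff_zero, coeff_add, coeff_sub, coeff_C_mul, Polynomial.coeff_C, cXm3, cXm2, cXm0,
        Polynomial.coeff_X, Polynomial.taylor_coeff, Polynomial.hasseDeriv_zero'] at h1
      simp only [eval_add, eval_mul, eval_C, eval_X]
      norm_num at h1 ⊢
      linear_combination -h1
    set n := G.natDegree with hndef
    have hGn : G.coeff n ≠ 0 := by
      have hlc : G.leadingCoeff ≠ 0 := Polynomial.leadingCoeff_ne_zero.mpr hGne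
      exact hlc
    have e1 := coeffExtract G 0 (-1) (Δ₀ - Δ₁) 0 hQA1 n (Nat.zero_le n)
    norm_num [Nat.choose_one_right] at e1
    -- e1 : (-(n:ℂ) + (Δ₀ - Δ₁)) * G.coeff n = 0  (roughly)
    have hδ : Δ₀ - Δ₁ = (n : ℂ) := by
      rcases e1 with h' | h'
      · linear_combination h'
      · exact absurd h' hGn
    by_cases hn1 : n ≤ 1
    · simp only [Set.mem_insert_iff, Set.mem_singleton_iff]
      rcases (by omega : n = 0 ∨ n = 1) with h01 | h01 <;> rw [hδ, h01] <;> norm_num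
    · push_neg at hn1
      have e2 := coeffExtract G 0 1 Δ₁ 1 hQA2 n (by omega)
      have e3 := coeffExtract G 0 1 Δ₁ 2 hQA3 n (by omega)
      norm_num at e2 e3
      have q2 : ((n.choose 2 : ℕ) : ℂ) + Δ₁ * (n : ℂ) = 0 := by
        rcases e2 with h' | h'
        · linear_combination h'
        · exact absurd h' hGn
      have q3 : ((n.choose 3 : ℕ) : ℂ) + Δ₁ * ((n.choose 2 : ℕ) : ℂ) = 0 := by
        rcases e3 with h' | h'
        · linear_combination h'
        · exact absurd h' hGn
      have E1 : (n:ℂ) * ((n:ℂ) - 1) + 2 * Δ₁ * (n:ℂ) = 0 := by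
        linear_combination 2*q2 - ch2 n
      have E2 : (n:ℂ) * ((n:ℂ)-1) * ((n:ℂ)-2) + 3 * Δ₁ * ((n:ℂ) * ((n:ℂ)-1)) = 0 := by
        linear_combination 6*q3 - ch3 n - 3*Δ₁*(ch2 n)
      have key : (n:ℂ) * ((n:ℂ)-1) * ((n:ℂ)+1) = 0 := by
        linear_combination 3*((n:ℂ)-1)*E1 - 2*E2
      have hm0 : (n:ℂ) ≠ 0 := Nat.cast_ne_zero.mpr (by omega)
      have hm1 : (n:ℂ) - 1 ≠ 0 := by
        intro hh
        have : (n:ℂ) = 1 := by linear_combination hh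
        have : n = 1 := by exact_mod_cast this
        omega
      have hm2 : (n:ℂ) + 1 ≠ 0 := by
        have : ((n:ℂ) + 1) = ((n+1 : ℕ) : ℂ) := by push_cast; ring
        rw [this]
        exact Nat.cast_ne_zero.mpr (by omega)
      rcases mul_eq_zero.mp key with h' | h'
      · rcases mul_eq_zero.mp h' with h'' | h''
        · exact absurd h'' hm0
        · exact absurd h'' hm1
      · exact absurd h' hm2
end

section
/- Let a, b, c ∈ ℂ with c ≠ 0, and let f ∈ ℂ[x,y] be a nonzero polynomial satisfying (x+by)·f(x+y, z) − (x+ay+z)·f(x,z) = (cy−z)·f(x, y+z) for all x, y, z ∈ ℂ. Then a − b + c ∈ {0, 1, 2, 3}. -/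
open Polynomial

private lemma eval_aeval2 (f : MvPolynomial (Fin 2) ℂ) (g : Fin 2 → Polynomial ℂ) (u : ℂ) :
    (MvPolynomial.aeval g f).eval u = MvPolynomial.eval (fun i => (g i).eval u) f := by
  induction f using MvPolynomial.induction_on with
  | C r => simp
  | add p q hp hq => simp [hp, hq]
  | mul_X p i hp => simp [hp]

private lemma poly_zero_of_ne (q : Polynomial ℂ) (hq : ∀ v : ℂ, v ≠ 0 → q.eval v = 0) :
    q = 0 := by
  apply Polynomial.eq_zero_of_infinite_isRoot
  have h1 : {v : ℂ | v ≠ 0} = ({0}ᶜ : Set ℂ) := by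
    ext v; simp
  have h2 : ({v : ℂ | v ≠ 0} : Set ℂ).Infinite := by
    rw [h1]; exact (Set.finite_singleton 0).infinite_compl
  apply Set.Infinite.mono ?_ h2
  intro v hv
  exact hq v hv

private lemma f_eq_zero (f : MvPolynomial (Fin 2) ℂ)
    (hv : ∀ u v : ℂ, v ≠ 0 → ev2 f u v = 0) : f = 0 := by
  have key : ∀ u v : ℂ, ev2 f u v = 0 := by
    intro u v
    have hqe : ∀ w : ℂ, (MvPolynomial.aeval ![Polynomial.C u, Polynomial.X] f).eval w
        = ev2 f u w := by
      intro w
      have harg : (fun i => Polynomial.eval w (![Polynomial.C u, Polynomial.X] i)) = ![u, w] := by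
        funext i; fin_cases i <;> simp
      rw [eval_aeval2, harg]
      rfl
    have hz : (MvPolynomial.aeval ![Polynomial.C u, Polynomial.X] f) = 0 :=
      poly_zero_of_ne _ (fun w hw => by rw [hqe]; exact hv u w hw)
    rw [← hqe v, hz, Polynomial.eval_zero]
  apply MvPolynomial.funext
  intro x
  have hx : ![x 0, x 1] = x := by
    funext i; fin_cases i <;> simp
  have := key (x 0) (x 1)
  unfold ev2 at this
  rw [hx] at this
  simpa using this

/-- coefficient extraction for `X^e * hasseDeriv f q`. -/
private lemma coeff_comb (q : Polynomial ℂ) (e f n m : ℕ) (hm : m + e = n + f) :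
    (X ^ e * hasseDeriv f q).coeff n = (m.choose f : ℂ) * q.coeff m := by
  rw [Polynomial.coeff_X_pow_mul']
  split_ifs with hle
  · have h1 : n - e + f = m := by omega
    rw [Polynomial.hasseDeriv_coeff, h1]
  · have h2 : m < f := by omega
    rw [Nat.choose_eq_zero_of_lt h2]
    simp

private lemma hD_hD (k l : ℕ) (q : Polynomial ℂ) :
    hasseDeriv k (hasseDeriv l q) = Polynomial.C (((k+l).choose k : ℕ) : ℂ) * hasseDeriv (k+l) q := by
  have h := LinearMap.congr_fun (Polynomial.hasseDeriv_comp (R := ℂ) k l) q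
  simp only [LinearMap.comp_apply, LinearMap.smul_apply] at h
  rw [h, nsmul_eq_mul]
  simp [Polynomial.C_eq_natCast]

private lemma choose_rec (m j : ℕ) :
    ((m.choose (j+1) : ℕ) : ℂ) * (j+1) = ((m.choose j : ℕ) : ℂ) * ((m:ℂ) - j) := by
  rcases le_or_gt (j+1) m with hle | hlt
  · have h := Nat.choose_succ_right_eq m j
    have h2 := congrArg (Nat.cast : ℕ → ℂ) h
    push_cast [Nat.cast_sub (show j ≤ m by omega)] at h2
    push_cast
    linear_combination h2
  · rcases Nat.lt_or_ge m j with h1 | h2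
    · rw [Nat.choose_eq_zero_of_lt (by omega), Nat.choose_eq_zero_of_lt h1]
      simp
    · have hmj : m = j := by omega
      subst hmj
      rw [Nat.choose_eq_zero_of_lt (by omega)]
      simp

theorem stmt18 (a b c : ℂ) (hc : c ≠ 0) (f : MvPolynomial (Fin 2) ℂ) (hf : f ≠ 0)
    (h : ∀ x y z : ℂ, (x + b * y) * ev2 f (x + y) z - (x + a * y + z) * ev2 f x z
      = (c * y - z) * ev2 f x (y + z)) :
    a - b + c ∈ ({0, 1, 2, 3} : Set ℂ) := by
  -- the polynomial p(x) = F(x,0)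
  set p : Polynomial ℂ := MvPolynomial.aeval ![Polynomial.X, 0] f with hpdef
  have hPev : ∀ u : ℂ, p.eval u = ev2 f u 0 := by
    intro u
    have harg : (fun i => Polynomial.eval u (![Polynomial.X, (0:Polynomial ℂ)] i)) = ![u, 0] := by
      funext i; fin_cases i <;> simp
    rw [hpdef, eval_aeval2, harg]
    rfl
  have hg : ∀ u v : ℂ, (u + b*v) * p.eval (u+v) - (u + a*v) * p.eval u
      = c * v * ev2 f u v := by
    intro u v
    have h0 := h u v 0
    simp only [add_zero, sub_zero] at h0
    rw [← hPev, ← hPev] at h0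
    exact h0
  have hp0 : p ≠ 0 := by
    intro hzero
    apply hf
    apply f_eq_zero
    intro u v hv
    have h0 := hg u v
    rw [hzero] at h0
    simp only [Polynomial.eval_zero, mul_zero, sub_zero] at h0
    have h1 : c * v * ev2 f u v = 0 := by linear_combination - h0
    rcases mul_eq_zero.mp h1 with h2 | h2
    · exact absurd h2 (mul_ne_zero hc hv)
    · exact h2
  -- leading coefficient data
  set m : ℕ := p.natDegree with hm
  have hdeg : p.natDegree = m := hm.symm
  have hpm : p.coeff m ≠ 0 := by
    rw [hm]
    exact Polynomial.leadingCoeff_ne_zero.mpr hp0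
  -- Step Y : coefficients of y^1 and y^2
  have hY : ∀ x z : ℂ,
      (z*(x+z)*(x+b*z) * (hasseDeriv 1 p).eval (x+z)
        + (x^2+(2*b+1-c)*x*z+(b^2+b-b*c)*z^2) * p.eval (x+z)
        + (-(x*z)*(x+a*z)) * (hasseDeriv 1 p).eval x
        + (-x^2-(a+b+1)*x*z-a*b*z^2) * p.eval x
        + ((-z - x - a*z) * ((x+b*z) * p.eval (x+z) - (x+a*z) * p.eval x)
            + (c*x*z - a*z^2 + a*c*z^2) * p.eval x) = 0)
      ∧
      (z*(x+z)*(x+b*z) * (hasseDeriv 2 p).eval (x+z)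
        + (x^2+(2*b+1-c)*x*z+(b^2+b-b*c)*z^2) * (hasseDeriv 1 p).eval (x+z)
        + ((1+b)*x+(b^2+b-b*c)*z) * p.eval (x+z)
        + (-(x*z)*(x+a*z)) * (hasseDeriv 2 p).eval x
        + (-x^2-(a+b+1)*x*z-a*b*z^2) * (hasseDeriv 1 p).eval x
        + (-(1+b)*x-(a*b+b)*z) * p.eval x
        + ((-a) * ((x+b*z) * p.eval (x+z) - (x+a*z) * p.eval x)
            + a*c*z * p.eval x) = 0) := by
    intro x z
    have hqy0 : (Polynomial.C (z*(x+z)*(x+b*z)) * (X^0 * taylor (x+z) p)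
      + Polynomial.C (x^2+(2*b+1-c)*x*z+(b^2+b-b*c)*z^2) * (X^1 * taylor (x+z) p)
      + Polynomial.C ((1+b)*x+(b^2+b-b*c)*z) * (X^2 * taylor (x+z) p)
      + Polynomial.C b * (X^3 * taylor (x+z) p)
      + Polynomial.C (-(x*z)*(x+a*z)) * (X^0 * taylor x p)
      + Polynomial.C (-x^2-(a+b+1)*x*z-a*b*z^2) * (X^1 * taylor x p)
      + Polynomial.C (-(1+b)*x-(a*b+b)*z) * (X^2 * taylor x p)
      + Polynomial.C (-b) * (X^3 * taylor x p)
      + Polynomial.C ((-(z*z) - x*z) * ((x+b*z) * p.eval (x+z) - (x+a*z) * p.eval x)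
          + (-(x*z^2) - a*z^3) * p.eval x)
      + Polynomial.C ((-z - x - a*z) * ((x+b*z) * p.eval (x+z) - (x+a*z) * p.eval x)
          + (c*x*z - a*z^2 + a*c*z^2) * p.eval x) * X^1
      + Polynomial.C ((-a) * ((x+b*z) * p.eval (x+z) - (x+a*z) * p.eval x)
          + a*c*z * p.eval x) * X^2) = 0 := by
      apply Polynomial.funext
      intro y
      rw [Polynomial.eval_zero]
      have e1 := hg (x+y) z
      have e2 := hg x z
      have e3 := hg x (y+z)
      rw [show x+(y+z) = x+y+z by ring] at e3
      have e4 := h x y z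
      simp only [Polynomial.eval_add, Polynomial.eval_mul, Polynomial.eval_pow,
        Polynomial.eval_C, Polynomial.eval_X, Polynomial.taylor_eval]
      rw [show y + (x+z) = x+y+z by ring, show y + x = x+y by ring]
      linear_combination (y+z)*(x+b*y)*e1 - (y+z)*(x+a*y+z)*e2 - z*(c*y-z)*e3 + c*z*(y+z)*e4
    constructor
    · have h1 := congrArg (fun q => Polynomial.coeff q 1) hqy0
      simp only [Polynomial.coeff_add, Polynomial.coeff_C_mul, Polynomial.coeff_X_pow_mul',
        Polynomial.coeff_X_pow, Polynomial.coeff_C, Polynomial.coeff_zero] at h1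
      simp only [Polynomial.taylor_coeff] at h1
      norm_num only [Polynomial.eval_mul, Polynomial.eval_C, Polynomial.hasseDeriv_zero',
        Nat.choose, if_true, if_false] at h1
      linear_combination h1
    · have h2 := congrArg (fun q => Polynomial.coeff q 2) hqy0
      simp only [Polynomial.coeff_add, Polynomial.coeff_C_mul, Polynomial.coeff_X_pow_mul',
        Polynomial.coeff_X_pow, Polynomial.coeff_C, Polynomial.coeff_zero] at h2
      simp only [Polynomial.taylor_coeff] at h2
      norm_num only [Polynomial.eval_mul, Polynomial.eval_C, Polynomial.hasseDeriv_zero',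
        Nat.choose, if_true, if_false] at h2
      linear_combination h2
  -- Step Z, family 1
  have hZ1 : ∀ x : ℂ,
      (x^2*(2*((hasseDeriv 2 p).eval x)) + (1+b)*x*((hasseDeriv 1 p).eval x)
       + (b-a-c)*x*((hasseDeriv 1 p).eval x) + (b-a-c)*b*(p.eval x)
       + (-(a*x)*((hasseDeriv 1 p).eval x) + (a-b+c)*a*(p.eval x)) = 0)
    ∧ (x^2*(3*((hasseDeriv 3 p).eval x)) + (1+b)*x*(2*((hasseDeriv 2 p).eval x))
       + b*((hasseDeriv 1 p).eval x)
       + (b-a-c)*x*((hasseDeriv 2 p).eval x) + (b-a-c)*b*((hasseDeriv 1 p).eval x) = 0)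
    ∧ (x^2*(4*((hasseDeriv 4 p).eval x)) + (1+b)*x*(3*((hasseDeriv 3 p).eval x))
       + b*(2*((hasseDeriv 2 p).eval x))
       + (b-a-c)*x*((hasseDeriv 3 p).eval x) + (b-a-c)*b*((hasseDeriv 2 p).eval x) = 0) := by
    intro x
    have hqz0 : (Polynomial.C (x^2) * (X^1 * taylor x (hasseDeriv 1 p))
      + Polynomial.C ((1+b)*x) * (X^2 * taylor x (hasseDeriv 1 p))
      + Polynomial.C b * (X^3 * taylor x (hasseDeriv 1 p))
      + Polynomial.C ((b-a-c)*x) * (X^1 * taylor x p)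
      + Polynomial.C ((b-a-c)*b) * (X^2 * taylor x p)
      + Polynomial.C (-(x^2)*((hasseDeriv 1 p).eval x) + (a-b+c)*x*(p.eval x)) * X^1
      + Polynomial.C (-(a*x)*((hasseDeriv 1 p).eval x) + (a-b+c)*a*(p.eval x)) * X^2) = 0 := by
      apply Polynomial.funext
      intro z
      rw [Polynomial.eval_zero]
      have e1 := (hY x z).1
      simp only [Polynomial.eval_add, Polynomial.eval_mul, Polynomial.eval_pow,
        Polynomial.eval_C, Polynomial.eval_X, Polynomial.taylor_eval]
      rw [show z + x = x + z by ring]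
      linear_combination e1
    refine ⟨?_, ?_, ?_⟩
    · have h1 := congrArg (fun q => Polynomial.coeff q 2) hqz0
      simp only [Polynomial.coeff_add, Polynomial.coeff_C_mul, Polynomial.coeff_X_pow_mul',
        Polynomial.coeff_X_pow, Polynomial.coeff_C, Polynomial.coeff_zero] at h1
      simp only [Polynomial.taylor_coeff] at h1
      simp only [hD_hD] at h1
      norm_num only [Polynomial.eval_mul, Polynomial.eval_C, Polynomial.hasseDeriv_zero',
        Nat.choose, if_true, if_false] at h1
      linear_combination h1
    · have h1 := congrArg (fun q => Polynomial.coeff q 3) hqz0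
      simp only [Polynomial.coeff_add, Polynomial.coeff_C_mul, Polynomial.coeff_X_pow_mul',
        Polynomial.coeff_X_pow, Polynomial.coeff_C, Polynomial.coeff_zero] at h1
      simp only [Polynomial.taylor_coeff] at h1
      simp only [hD_hD] at h1
      norm_num only [Polynomial.eval_mul, Polynomial.eval_C, Polynomial.hasseDeriv_zero',
        Nat.choose, if_true, if_false] at h1
      linear_combination h1
    · have h1 := congrArg (fun q => Polynomial.coeff q 4) hqz0
      simp only [Polynomial.coeff_add, Polynomial.coeff_C_mul, Polynomial.coeff_X_pow_mul',
        Polynomial.coeff_X_pow, Polynomial.coeff_C, Polynomial.coeff_zero] at h1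
      simp only [Polynomial.taylor_coeff] at h1
      simp only [hD_hD] at h1
      norm_num only [Polynomial.eval_mul, Polynomial.eval_C, Polynomial.hasseDeriv_zero',
        Nat.choose, if_true, if_false] at h1
      linear_combination h1
  -- Step Z, family 2
  have hZ2 : ∀ x : ℂ,
      (x^2*(6*((hasseDeriv 4 p).eval x)) + (1+b)*x*(3*((hasseDeriv 3 p).eval x))
        + b*((hasseDeriv 2 p).eval x)
        + x^2*(4*((hasseDeriv 4 p).eval x)) + (2*b+1-c)*x*(3*((hasseDeriv 3 p).eval x))
        + (b^2+b-b*c)*(2*((hasseDeriv 2 p).eval x))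
        + (1+b-a)*x*((hasseDeriv 3 p).eval x) + (b^2+b-b*c-a*b)*((hasseDeriv 2 p).eval x) = 0)
    ∧ (x^2*(10*((hasseDeriv 5 p).eval x)) + (1+b)*x*(6*((hasseDeriv 4 p).eval x))
        + b*(3*((hasseDeriv 3 p).eval x))
        + x^2*(5*((hasseDeriv 5 p).eval x)) + (2*b+1-c)*x*(4*((hasseDeriv 4 p).eval x))
        + (b^2+b-b*c)*(3*((hasseDeriv 3 p).eval x))
        + (1+b-a)*x*((hasseDeriv 4 p).eval x) + (b^2+b-b*c-a*b)*((hasseDeriv 3 p).eval x) = 0)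
    ∧ (x^2*(15*((hasseDeriv 6 p).eval x)) + (1+b)*x*(10*((hasseDeriv 5 p).eval x))
        + b*(6*((hasseDeriv 4 p).eval x))
        + x^2*(6*((hasseDeriv 6 p).eval x)) + (2*b+1-c)*x*(5*((hasseDeriv 5 p).eval x))
        + (b^2+b-b*c)*(4*((hasseDeriv 4 p).eval x))
        + (1+b-a)*x*((hasseDeriv 5 p).eval x) + (b^2+b-b*c-a*b)*((hasseDeriv 4 p).eval x) = 0) := by
    intro x
    have hqz0 : (Polynomial.C (x^2) * (X^1 * taylor x (hasseDeriv 2 p))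
      + Polynomial.C ((1+b)*x) * (X^2 * taylor x (hasseDeriv 2 p))
      + Polynomial.C b * (X^3 * taylor x (hasseDeriv 2 p))
      + Polynomial.C (x^2) * (X^0 * taylor x (hasseDeriv 1 p))
      + Polynomial.C ((2*b+1-c)*x) * (X^1 * taylor x (hasseDeriv 1 p))
      + Polynomial.C (b^2+b-b*c) * (X^2 * taylor x (hasseDeriv 1 p))
      + Polynomial.C ((1+b-a)*x) * (X^0 * taylor x p)
      + Polynomial.C (b^2+b-b*c-a*b) * (X^1 * taylor x p)
      + Polynomial.C (-(x^2)*((hasseDeriv 2 p).eval x)) * X^1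
      + Polynomial.C (-(a*x)*((hasseDeriv 2 p).eval x)) * X^2
      + Polynomial.C (-(x^2)*((hasseDeriv 1 p).eval x)) * X^0
      + Polynomial.C (-((a+b+1)*x)*((hasseDeriv 1 p).eval x)) * X^1
      + Polynomial.C (-(a*b)*((hasseDeriv 1 p).eval x)) * X^2
      + Polynomial.C ((a-b-1)*x*(p.eval x)) * X^0
      + Polynomial.C ((a*(a-b+c)-b)*(p.eval x)) * X^1) = 0 := by
      apply Polynomial.funext
      intro z
      rw [Polynomial.eval_zero]
      have e1 := (hY x z).2
      simp only [Polynomial.eval_add, Polynomial.eval_mul, Polynomial.eval_pow,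
        Polynomial.eval_C, Polynomial.eval_X, Polynomial.taylor_eval]
      rw [show z + x = x + z by ring]
      linear_combination e1
    refine ⟨?_, ?_, ?_⟩
    · have h1 := congrArg (fun q => Polynomial.coeff q 3) hqz0
      simp only [Polynomial.coeff_add, Polynomial.coeff_C_mul, Polynomial.coeff_X_pow_mul',
        Polynomial.coeff_X_pow, Polynomial.coeff_C, Polynomial.coeff_zero] at h1
      simp only [Polynomial.taylor_coeff] at h1
      simp only [hD_hD] at h1
      norm_num only [Polynomial.eval_mul, Polynomial.eval_C, Polynomial.hasseDeriv_zero',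
        Nat.choose, if_true, if_false] at h1
      linear_combination h1
    · have h1 := congrArg (fun q => Polynomial.coeff q 4) hqz0
      simp only [Polynomial.coeff_add, Polynomial.coeff_C_mul, Polynomial.coeff_X_pow_mul',
        Polynomial.coeff_X_pow, Polynomial.coeff_C, Polynomial.coeff_zero] at h1
      simp only [Polynomial.taylor_coeff] at h1
      simp only [hD_hD] at h1
      norm_num only [Polynomial.eval_mul, Polynomial.eval_C, Polynomial.hasseDeriv_zero',
        Nat.choose, if_true, if_false] at h1
      linear_combination h1
    · have h1 := congrArg (fun q => Polynomial.coeff q 5) hqz0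
      simp only [Polynomial.coeff_add, Polynomial.coeff_C_mul, Polynomial.coeff_X_pow_mul',
        Polynomial.coeff_X_pow, Polynomial.coeff_C, Polynomial.coeff_zero] at h1
      simp only [Polynomial.taylor_coeff] at h1
      simp only [hD_hD] at h1
      norm_num only [Polynomial.eval_mul, Polynomial.eval_C, Polynomial.hasseDeriv_zero',
        Nat.choose, if_true, if_false] at h1
      linear_combination h1
  -- Rows : polynomial identities
  have hRow12 : Polynomial.C (2:ℂ) * (X^2 * hasseDeriv 2 p)
      + Polynomial.C (1+2*b-2*a-c) * (X^1 * hasseDeriv 1 p)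
      + Polynomial.C ((a-b)*(a-b+c)) * (X^0 * hasseDeriv 0 p) = 0 := by
    apply Polynomial.funext
    intro x
    rw [Polynomial.eval_zero]
    simp only [Polynomial.eval_add, Polynomial.eval_mul, Polynomial.eval_pow,
      Polynomial.eval_C, Polynomial.eval_X, Polynomial.hasseDeriv_zero']
    linear_combination (hZ1 x).1
  have hRow13 : Polynomial.C (3:ℂ) * (X^2 * hasseDeriv 3 p)
      + Polynomial.C (2+3*b-a-c) * (X^1 * hasseDeriv 2 p)
      + Polynomial.C (b*(1-c+b-a)) * (X^0 * hasseDeriv 1 p) = 0 := by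
    apply Polynomial.funext
    intro x
    rw [Polynomial.eval_zero]
    simp only [Polynomial.eval_add, Polynomial.eval_mul, Polynomial.eval_pow,
      Polynomial.eval_C, Polynomial.eval_X, Polynomial.hasseDeriv_zero']
    linear_combination (hZ1 x).2.1
  have hRow14 : Polynomial.C (4:ℂ) * (X^2 * hasseDeriv 4 p)
      + Polynomial.C (3+4*b-a-c) * (X^1 * hasseDeriv 3 p)
      + Polynomial.C (b*(2-c+b-a)) * (X^0 * hasseDeriv 2 p) = 0 := by
    apply Polynomial.funext
    intro x
    rw [Polynomial.eval_zero]
    simp only [Polynomial.eval_add, Polynomial.eval_mul, Polynomial.eval_pow,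
      Polynomial.eval_C, Polynomial.eval_X, Polynomial.hasseDeriv_zero']
    linear_combination (hZ1 x).2.2
  have hRow23 : Polynomial.C (10:ℂ) * (X^2 * hasseDeriv 4 p)
      + Polynomial.C (7-3*c+10*b-a) * (X^1 * hasseDeriv 3 p)
      + Polynomial.C (4*b-3*b*c+3*b^2-a*b) * (X^0 * hasseDeriv 2 p) = 0 := by
    apply Polynomial.funext
    intro x
    rw [Polynomial.eval_zero]
    simp only [Polynomial.eval_add, Polynomial.eval_mul, Polynomial.eval_pow,
      Polynomial.eval_C, Polynomial.eval_X, Polynomial.hasseDeriv_zero']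
    linear_combination (hZ2 x).1
  have hRow24 : Polynomial.C (15:ℂ) * (X^2 * hasseDeriv 5 p)
      + Polynomial.C (11-4*c+15*b-a) * (X^1 * hasseDeriv 4 p)
      + Polynomial.C (7*b-4*b*c+4*b^2-a*b) * (X^0 * hasseDeriv 3 p) = 0 := by
    apply Polynomial.funext
    intro x
    rw [Polynomial.eval_zero]
    simp only [Polynomial.eval_add, Polynomial.eval_mul, Polynomial.eval_pow,
      Polynomial.eval_C, Polynomial.eval_X, Polynomial.hasseDeriv_zero']
    linear_combination (hZ2 x).2.1
  have hRow25 : Polynomial.C (21:ℂ) * (X^2 * hasseDeriv 6 p)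
      + Polynomial.C (16-5*c+21*b-a) * (X^1 * hasseDeriv 5 p)
      + Polynomial.C (11*b-5*b*c+5*b^2-a*b) * (X^0 * hasseDeriv 4 p) = 0 := by
    apply Polynomial.funext
    intro x
    rw [Polynomial.eval_zero]
    simp only [Polynomial.eval_add, Polynomial.eval_mul, Polynomial.eval_pow,
      Polynomial.eval_C, Polynomial.eval_X, Polynomial.hasseDeriv_zero']
    linear_combination (hZ2 x).2.2
  -- scalar coefficient equations
  have e12k : ∀ k : ℕ, (2*((k.choose 2 : ℕ):ℂ) + (1+2*b-2*a-c)*((k.choose 1 : ℕ):ℂ)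
      + (a-b)*(a-b+c)*((k.choose 0 : ℕ):ℂ)) * p.coeff k = 0 := by
    intro k
    have h1 := congrArg (fun q => Polynomial.coeff q k) hRow12
    simp only [Polynomial.coeff_add, Polynomial.coeff_C_mul, Polynomial.coeff_zero] at h1
    rw [coeff_comb p 2 2 k k (by omega), coeff_comb p 1 1 k k (by omega),
        coeff_comb p 0 0 k k (by omega)] at h1
    linear_combination h1
  clear_value m
  clear hm
  -- dichotomy from the leading coefficient
  have hsupp : (2*((m.choose 2 : ℕ):ℂ) + (1+2*b-2*a-c)*((m.choose 1 : ℕ):ℂ)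
      + (a-b)*(a-b+c)*((m.choose 0 : ℕ):ℂ)) = 0 := by
    rcases mul_eq_zero.mp (e12k m) with h' | h'
    · exact h'
    · exact absurd h' hpm
  have hch1 : ((m.choose 1 : ℕ):ℂ) = (m:ℂ) := by rw [Nat.choose_one_right]
  have hch2 : ((m.choose 2 : ℕ):ℂ) = (m:ℂ)*((m:ℂ)-1)/2 := by
    have h2 := choose_rec m 1
    rw [hch1] at h2
    push_cast at h2
    linear_combination h2 / 2
  have hch3 : ((m.choose 3 : ℕ):ℂ) = (m:ℂ)*((m:ℂ)-1)*((m:ℂ)-2)/6 := by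
    have h2 := choose_rec m 2
    rw [hch2] at h2
    push_cast at h2
    linear_combination h2 / 3
  have hch4 : ((m.choose 4 : ℕ):ℂ) = (m:ℂ)*((m:ℂ)-1)*((m:ℂ)-2)*((m:ℂ)-3)/24 := by
    have h2 := choose_rec m 3
    rw [hch3] at h2
    push_cast at h2
    linear_combination h2 / 4
  have hch5 : ((m.choose 5 : ℕ):ℂ) = (m:ℂ)*((m:ℂ)-1)*((m:ℂ)-2)*((m:ℂ)-3)*((m:ℂ)-4)/120 := by
    have h2 := choose_rec m 4
    rw [hch4] at h2
    push_cast at h2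
    linear_combination h2 / 5
  have hch6 : ((m.choose 6 : ℕ):ℂ)
      = (m:ℂ)*((m:ℂ)-1)*((m:ℂ)-2)*((m:ℂ)-3)*((m:ℂ)-4)*((m:ℂ)-5)/720 := by
    have h2 := choose_rec m 5
    rw [hch5] at h2
    push_cast at h2
    linear_combination h2 / 6
  have hch0 : ((m.choose 0 : ℕ):ℂ) = 1 := by rw [Nat.choose_zero_right]; norm_num
  have hfact : ((m:ℂ) - (a-b)) * ((m:ℂ) - (a-b) - c) = 0 := by
    rw [hch0, hch1, hch2] at hsupp
    linear_combination hsupp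
  have hMne : ∀ t : ℕ, m ≠ t → ((m:ℂ) - (t:ℕ)) ≠ 0 := by
    intro t ht
    exact sub_ne_zero_of_ne (by exact_mod_cast ht)
  by_cases hAq : (m:ℂ) - (a-b) - c = 0
  · -- Case A : lambda = m
    have hL : a - b + c = (m:ℂ) := by linear_combination - hAq
    by_cases hm3 : m ≤ 3
    · rw [hL]
      interval_cases m <;> simp
    · -- m >= 4 : contradiction
      exfalso
      push_neg at hm3
      have hm4 : 4 ≤ m := hm3
      -- extract the three equations
      have e23 : (10*((m.choose 4 : ℕ):ℂ) + (7-3*c+10*b-a)*((m.choose 3 : ℕ):ℂ)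
          + (4*b-3*b*c+3*b^2-a*b)*((m.choose 2 : ℕ):ℂ)) = 0 := by
        have h1 := congrArg (fun q => Polynomial.coeff q (m-2)) hRow23
        simp only [Polynomial.coeff_add, Polynomial.coeff_C_mul, Polynomial.coeff_zero] at h1
        rw [coeff_comb p 2 4 (m-2) m (by omega), coeff_comb p 1 3 (m-2) m (by omega),
            coeff_comb p 0 2 (m-2) m (by omega)] at h1
        rcases mul_eq_zero.mp (show (10*((m.choose 4 : ℕ):ℂ) + (7-3*c+10*b-a)*((m.choose 3 : ℕ):ℂ)
          + (4*b-3*b*c+3*b^2-a*b)*((m.choose 2 : ℕ):ℂ)) * p.coeff m = 0 by linear_combination h1)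
          with h' | h'
        · exact h'
        · exact absurd h' hpm
      have e24 : (15*((m.choose 5 : ℕ):ℂ) + (11-4*c+15*b-a)*((m.choose 4 : ℕ):ℂ)
          + (7*b-4*b*c+4*b^2-a*b)*((m.choose 3 : ℕ):ℂ)) = 0 := by
        have h1 := congrArg (fun q => Polynomial.coeff q (m-3)) hRow24
        simp only [Polynomial.coeff_add, Polynomial.coeff_C_mul, Polynomial.coeff_zero] at h1
        rw [coeff_comb p 2 5 (m-3) m (by omega), coeff_comb p 1 4 (m-3) m (by omega),
            coeff_comb p 0 3 (m-3) m (by omega)] at h1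
        rcases mul_eq_zero.mp (show (15*((m.choose 5 : ℕ):ℂ) + (11-4*c+15*b-a)*((m.choose 4 : ℕ):ℂ)
          + (7*b-4*b*c+4*b^2-a*b)*((m.choose 3 : ℕ):ℂ)) * p.coeff m = 0 by linear_combination h1)
          with h' | h'
        · exact h'
        · exact absurd h' hpm
      have e25 : (21*((m.choose 6 : ℕ):ℂ) + (16-5*c+21*b-a)*((m.choose 5 : ℕ):ℂ)
          + (11*b-5*b*c+5*b^2-a*b)*((m.choose 4 : ℕ):ℂ)) = 0 := by
        have h1 := congrArg (fun q => Polynomial.coeff q (m-4)) hRow25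
        simp only [Polynomial.coeff_add, Polynomial.coeff_C_mul, Polynomial.coeff_zero] at h1
        rw [coeff_comb p 2 6 (m-4) m (by omega), coeff_comb p 1 5 (m-4) m (by omega),
            coeff_comb p 0 4 (m-4) m (by omega)] at h1
        rcases mul_eq_zero.mp (show (21*((m.choose 6 : ℕ):ℂ) + (16-5*c+21*b-a)*((m.choose 5 : ℕ):ℂ)
          + (11*b-5*b*c+5*b^2-a*b)*((m.choose 4 : ℕ):ℂ)) * p.coeff m = 0 by linear_combination h1)
          with h' | h'
        · exact h'
        · exact absurd h' hpm
      rw [hch2, hch3, hch4] at e23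
      rw [hch3, hch4, hch5] at e24
      rw [hch4, hch5, hch6] at e25
      have ha : a = b + (m:ℂ) - c := by linear_combination - hAq
      subst ha
      have hM0 : ((m:ℂ)) ≠ 0 := by
        have := hMne 0 (by omega); simpa using this
      have hM1 : ((m:ℂ)) - 1 ≠ 0 := by
        have := hMne 1 (by omega); simpa using this
      have hM2 : ((m:ℂ)) - 2 ≠ 0 := by
        have := hMne 2 (by omega); simpa using this
      have hM3' : ((m:ℂ)) - 3 ≠ 0 := by
        have := hMne 3 (by omega); simpa using this
      have hMp1 : ((m:ℂ)) + 1 ≠ 0 := by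
        intro hcon
        have h2 : ((m+1 : ℕ) : ℂ) = 0 := by push_cast; linear_combination hcon
        exact (Nat.cast_ne_zero.mpr (by omega : m + 1 ≠ 0)) h2
      have hMp2 : ((m:ℂ)) + 2 ≠ 0 := by
        intro hcon
        have h2 : ((m+2 : ℕ) : ℂ) = 0 := by push_cast; linear_combination hcon
        exact (Nat.cast_ne_zero.mpr (by omega : m + 2 ≠ 0)) h2
      have hbig1 : ((m:ℂ)*((m:ℂ)-1)*((m:ℂ)-2)*((m:ℂ)+1))*(2*b-c+((m:ℂ)-1)) = 0 := by
        linear_combination (12*((m:ℂ)-2))*e23 - 24*e24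
      have hL1 : 2*b-c+((m:ℂ)-1) = 0 := by
        rcases mul_eq_zero.mp hbig1 with h' | h'
        · exact absurd h' (mul_ne_zero (mul_ne_zero (mul_ne_zero hM0 hM1) hM2) hMp1)
        · exact h'
      have hbig2 : ((m:ℂ)*((m:ℂ)-1)*((m:ℂ)-2)*((m:ℂ)-3)*((m:ℂ)+1))*(10*b-6*c+(5*(m:ℂ)-6)) = 0 := by
        linear_combination (240*((m:ℂ)-3))*e24 - 720*e25
      have hL2 : 10*b-6*c+(5*(m:ℂ)-6) = 0 := by
        rcases mul_eq_zero.mp hbig2 with h' | h'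
        · exact absurd h'
            (mul_ne_zero (mul_ne_zero (mul_ne_zero (mul_ne_zero hM0 hM1) hM2) hM3') hMp1)
        · exact h'
      have hb2 : 2*b + (m:ℂ) = 0 := by linear_combination 6*hL1 - hL2
      have hcc : c + 1 = 0 := by linear_combination hb2 - hL1
      have hMM : ((m:ℂ)*((m:ℂ)-1))*((m:ℂ)+2) = 0 := by
        linear_combination (-4)*e23 + ((m:ℂ)*((m:ℂ)-1)*((2*b+(m:ℂ)) - 2*(c+1)))*hb2
          + ((m:ℂ)*((m:ℂ)-1)*(2*(m:ℂ)+8)/3)*hcc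
      rcases mul_eq_zero.mp hMM with h' | h'
      · exact absurd h' (mul_ne_zero hM0 hM1)
      · exact absurd h' hMp2
  · -- Case B : a - b = m
    have hB : (m:ℂ) - (a-b) = 0 := by
      rcases mul_eq_zero.mp hfact with h' | h'
      · exact h'
      · exact absurd h' hAq
    have ha : a = b + (m:ℂ) := by linear_combination - hB
    subst ha
    rcases Nat.lt_or_ge m 2 with hm2 | hm2
    · -- m = 0 or m = 1
      interval_cases m
      · -- m = 0 : then the two sides of hg coincide, so f = 0
        exfalso
        apply hf
        apply f_eq_zero
        intro u v hv
        have hpc : p = Polynomial.C (p.coeff 0) := Polynomial.eq_C_of_natDegree_eq_zero hdeg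
        have h0 := hg u v
        rw [hpc] at h0
        simp only [Polynomial.eval_C] at h0
        push_cast at h0
        have h1 : c * v * ev2 f u v = 0 := by linear_combination - h0
        rcases mul_eq_zero.mp h1 with h2 | h2
        · exact absurd h2 (mul_ne_zero hc hv)
        · exact h2
      · -- m = 1
        have e13 : (3*(((1:ℕ).choose 3 : ℕ):ℂ) + (2-c+3*b-(b+((1:ℕ):ℂ)))*(((1:ℕ).choose 2 : ℕ):ℂ)
            + (b*(1-c+b-(b+((1:ℕ):ℂ))))*(((1:ℕ).choose 1 : ℕ):ℂ)) * p.coeff 1 = 0 := by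
          have h1 := congrArg (fun q => Polynomial.coeff q 0) hRow13
          simp only [Polynomial.coeff_add, Polynomial.coeff_C_mul, Polynomial.coeff_zero] at h1
          rw [coeff_comb p 2 3 0 1 (by omega), coeff_comb p 1 2 0 1 (by omega),
              coeff_comb p 0 1 0 1 (by omega)] at h1
          linear_combination h1
        have hb0 : b = 0 := by
          have h1 : (b*c) * p.coeff 1 = 0 := by
            have hc3 : ((Nat.choose 1 3 : ℕ) : ℂ) = 0 := by norm_num [Nat.choose]
            have hc2' : ((Nat.choose 1 2 : ℕ) : ℂ) = 0 := by norm_num [Nat.choose]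
            have hc1' : ((Nat.choose 1 1 : ℕ) : ℂ) = 1 := by norm_num
            rw [hc3, hc2', hc1'] at e13
            push_cast at e13
            linear_combination - e13
          rcases mul_eq_zero.mp h1 with h2 | h2
          · rcases mul_eq_zero.mp h2 with h3 | h3
            · exact h3
            · exact absurd h3 hc
          · exact absurd h2 hpm
        by_cases hp00 : p.coeff 0 = 0
        · exfalso
          apply hf
          apply f_eq_zero
          intro u v hv
          have hple : p = Polynomial.C (p.coeff 1) * X + Polynomial.C (p.coeff 0) :=
            Polynomial.eq_X_add_C_of_natDegree_le_one (by omega)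
          have hpe : ∀ t : ℂ, p.eval t = p.coeff 1 * t := by
            intro t
            conv_lhs => rw [hple]
            simp [hp00]
          have h0 := hg u v
          simp only [hpe] at h0
          push_cast at h0
          rw [hb0] at h0
          have h1 : c * v * ev2 f u v = 0 := by linear_combination - h0
          rcases mul_eq_zero.mp h1 with h2 | h2
          · exact absurd h2 (mul_ne_zero hc hv)
          · exact h2
        · -- lambda = 0
          have h1 := e12k 0
          norm_num [Nat.choose] at h1
          rcases h1 with h2 | h2
          · simp only [Set.mem_insert_iff]
            left
            push_cast
            linear_combination h2
          · exact absurd h2 hp00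
    · -- m >= 2 : contradiction
      exfalso
      have e13 : (3*((m.choose 3 : ℕ):ℂ) + (2-c+3*b-(b+(m:ℂ)))*((m.choose 2 : ℕ):ℂ)
          + (b*(1-c+b-(b+(m:ℂ))))*((m.choose 1 : ℕ):ℂ)) = 0 := by
        have h1 := congrArg (fun q => Polynomial.coeff q (m-1)) hRow13
        simp only [Polynomial.coeff_add, Polynomial.coeff_C_mul, Polynomial.coeff_zero] at h1
        rw [coeff_comb p 2 3 (m-1) m (by omega), coeff_comb p 1 2 (m-1) m (by omega),
            coeff_comb p 0 1 (m-1) m (by omega)] at h1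
        rcases mul_eq_zero.mp (show (3*((m.choose 3 : ℕ):ℂ) + (2-c+3*b-(b+(m:ℂ)))*((m.choose 2 : ℕ):ℂ)
          + (b*(1-c+b-(b+(m:ℂ))))*((m.choose 1 : ℕ):ℂ)) * p.coeff m = 0 by linear_combination h1)
          with h' | h'
        · exact h'
        · exact absurd h' hpm
      have e14 : (4*((m.choose 4 : ℕ):ℂ) + (3-c+4*b-(b+(m:ℂ)))*((m.choose 3 : ℕ):ℂ)
          + (b*(2-c+b-(b+(m:ℂ))))*((m.choose 2 : ℕ):ℂ)) = 0 := by
        have h1 := congrArg (fun q => Polynomial.coeff q (m-2)) hRow14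
        simp only [Polynomial.coeff_add, Polynomial.coeff_C_mul, Polynomial.coeff_zero] at h1
        rw [coeff_comb p 2 4 (m-2) m (by omega), coeff_comb p 1 3 (m-2) m (by omega),
            coeff_comb p 0 2 (m-2) m (by omega)] at h1
        rcases mul_eq_zero.mp (show (4*((m.choose 4 : ℕ):ℂ) + (3-c+4*b-(b+(m:ℂ)))*((m.choose 3 : ℕ):ℂ)
          + (b*(2-c+b-(b+(m:ℂ))))*((m.choose 2 : ℕ):ℂ)) * p.coeff m = 0 by linear_combination h1)
          with h' | h'
        · exact h'
        · exact absurd h' hpm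
      rw [hch2, hch3, hch1] at e13
      rw [hch2, hch3, hch4] at e14
      have hM0 : ((m:ℂ)) ≠ 0 := by
        have := hMne 0 (by omega); simpa using this
      have hM1 : ((m:ℂ)) - 1 ≠ 0 := by
        have := hMne 1 (by omega); simpa using this
      have k1 : (c*(m:ℂ))*(((m:ℂ)-1)+2*b) = 0 := by linear_combination (-2)*e13
      have l1 : ((m:ℂ)-1)+2*b = 0 := by
        rcases mul_eq_zero.mp k1 with h' | h'
        · exact absurd h' (mul_ne_zero hc hM0)
        · exact h'
      have k2 : (c*(m:ℂ)*((m:ℂ)-1))*(((m:ℂ)-2)+3*b) = 0 := by linear_combination (-6)*e14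
      have l2 : ((m:ℂ)-2)+3*b = 0 := by
        rcases mul_eq_zero.mp k2 with h' | h'
        · exact absurd h' (mul_ne_zero (mul_ne_zero hc hM0) hM1)
        · exact h'
      have habs : (m:ℂ) + 1 = 0 := by linear_combination 3*l1 - 2*l2
      have h2 : ((m+1 : ℕ) : ℂ) = 0 := by push_cast; linear_combination habs
      exact (Nat.cast_ne_zero.mpr (by omega : m + 1 ≠ 0)) h2
end

section
/- Let b ∈ ℂ and let f ∈ ℂ[x,y] satisfy (x+by)·f(x+y, z) − (x+by+z)·f(x,z) = −z·f(x, y+z) for all x, y, z ∈ ℂ (i.e., the case a = b, c = 0 of the key equation). If f is a nontrivial solution with a − b = 0, then f is a constant polynomial. -/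
section Aux
open MvPolynomial

lemma aeval_eq_eval2 {n : ℕ} (g : Fin n → ℂ) (p : MvPolynomial (Fin n) ℂ) :
    MvPolynomial.aeval g p = MvPolynomial.eval g p := by
  rw [MvPolynomial.aeval_def, Algebra.algebraMap_self, MvPolynomial.eval₂_id]

lemma eval_aeval3 (v : Fin 3 → ℂ) (s : Fin 2 → MvPolynomial (Fin 3) ℂ)
    (p : MvPolynomial (Fin 2) ℂ) :
    MvPolynomial.eval v (MvPolynomial.aeval s p)
      = MvPolynomial.eval (fun i => MvPolynomial.eval v (s i)) p := by
  rw [← aeval_eq_eval2, ← aeval_eq_eval2, MvPolynomial.comp_aeval_apply]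
  simp_rw [aeval_eq_eval2]

lemma chain3 (s : Fin 2 → MvPolynomial (Fin 3) ℂ) (j : Fin 3) (f : MvPolynomial (Fin 2) ℂ) :
    MvPolynomial.pderiv j (MvPolynomial.aeval s f) =
      MvPolynomial.aeval s (MvPolynomial.pderiv 0 f) * MvPolynomial.pderiv j (s 0)
        + MvPolynomial.aeval s (MvPolynomial.pderiv 1 f) * MvPolynomial.pderiv j (s 1) := by
  induction f using MvPolynomial.induction_on with
  | C a => simp
  | add p q hp hq => simp only [map_add, hp, hq]; ring
  | mul_X p i hp =>
    have e0 : (MvPolynomial.pderiv (0:Fin 2)) (p * X 0) = MvPolynomial.pderiv 0 p * X 0 + p * 1 := by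
      rw [pderiv_mul, pderiv_X_self]
    have e1 : (MvPolynomial.pderiv (1:Fin 2)) (p * X 0) = MvPolynomial.pderiv 1 p * X 0 + p * 0 := by
      rw [pderiv_mul, pderiv_X_of_ne (by decide)]
    have e2 : (MvPolynomial.pderiv (0:Fin 2)) (p * X 1) = MvPolynomial.pderiv 0 p * X 1 + p * 0 := by
      rw [pderiv_mul, pderiv_X_of_ne (by decide)]
    have e3 : (MvPolynomial.pderiv (1:Fin 2)) (p * X 1) = MvPolynomial.pderiv 1 p * X 1 + p * 1 := by
      rw [pderiv_mul, pderiv_X_self]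
    fin_cases i
    · rw [show (⟨0, by norm_num⟩ : Fin 2) = 0 from rfl, map_mul, aeval_X, pderiv_mul, hp, e0, e1]
      simp only [map_add, map_mul, aeval_X, map_one, map_zero, mul_one, mul_zero, add_zero]
      ring
    · rw [show (⟨1, by norm_num⟩ : Fin 2) = 1 from rfl, map_mul, aeval_X, pderiv_mul, hp, e2, e3]
      simp only [map_add, map_mul, aeval_X, map_one, map_zero, mul_one, mul_zero, add_zero]
      ring


lemma coeff_pderiv2 (i : Fin 2) (f : MvPolynomial (Fin 2) ℂ) (m : Fin 2 →₀ ℕ) :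
    MvPolynomial.coeff m (MvPolynomial.pderiv i f)
      = ((m i : ℂ) + 1) * MvPolynomial.coeff (m + Finsupp.single i 1) f := by
  induction f using MvPolynomial.induction_on' with
  | add p q hp hq => simp only [map_add, coeff_add, hp, hq]; ring
  | monomial s a =>
    rw [pderiv_monomial, coeff_monomial, coeff_monomial]
    by_cases hs : s = m + Finsupp.single i 1
    · subst hs
      have h1 : m + Finsupp.single i 1 - Finsupp.single i 1 = m :=
        add_tsub_cancel_right _ _
      have h2 : (m + Finsupp.single i 1 : Fin 2 →₀ ℕ) i = m i + 1 := by
        rw [Finsupp.add_apply, Finsupp.single_eq_same]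
      rw [if_pos h1, if_pos rfl, h2]
      push_cast; ring
    · rw [if_neg hs]
      by_cases hsi : s i = 0
      · by_cases h2 : s - Finsupp.single i 1 = m
        · rw [if_pos h2, hsi]; simp
        · rw [if_neg h2]; ring
      · by_cases h2 : s - Finsupp.single i 1 = m
        · exfalso
          apply hs
          rw [← h2, tsub_add_cancel_of_le
            (Finsupp.single_le_iff.mpr (Nat.one_le_iff_ne_zero.mpr hsi))]
        · rw [if_neg h2]; ring

lemma coeff_X_mul_pderiv (i : Fin 2) (f : MvPolynomial (Fin 2) ℂ) (d : Fin 2 →₀ ℕ) :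
    MvPolynomial.coeff d (X i * MvPolynomial.pderiv i f)
      = (d i : ℂ) * MvPolynomial.coeff d f := by
  rw [coeff_X_mul']
  by_cases hd : i ∈ d.support
  · rw [if_pos hd, coeff_pderiv2]
    have hdi : d i ≠ 0 := Finsupp.mem_support_iff.mp hd
    have h1 : (d - Finsupp.single i 1 : Fin 2 →₀ ℕ) i = d i - 1 := by
      rw [Finsupp.tsub_apply, Finsupp.single_eq_same]
    have h2 : d - Finsupp.single i 1 + Finsupp.single i 1 = d :=
      tsub_add_cancel_of_le (Finsupp.single_le_iff.mpr (Nat.one_le_iff_ne_zero.mpr hdi))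
    rw [h1, h2]
    have h3 : (d i - 1) + 1 = d i := Nat.succ_pred_eq_of_pos (Nat.pos_of_ne_zero hdi)
    rw [← h3]
    push_cast
    ring
  · rw [if_neg hd]
    have : d i = 0 := Finsupp.notMem_support_iff.mp hd
    rw [this]
    simp

lemma euler_const (f : MvPolynomial (Fin 2) ℂ)
    (E : X 0 * MvPolynomial.pderiv 0 f + X 1 * MvPolynomial.pderiv 1 f = 0) :
    f = MvPolynomial.C (MvPolynomial.coeff 0 f) := by
  ext d
  rw [MvPolynomial.coeff_C]
  by_cases hd : 0 = d
  · rw [if_pos hd, hd]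
  · rw [if_neg hd]
    have h0 := congrArg (MvPolynomial.coeff d) E
    rw [coeff_add, coeff_X_mul_pderiv, coeff_X_mul_pderiv, coeff_zero, ← add_mul] at h0
    have hne : ((d 0 : ℂ) + (d 1 : ℂ)) ≠ 0 := by
      obtain ⟨k, hk⟩ := Finsupp.ne_iff.mp (Ne.symm hd)
      have hk' : d k ≠ 0 := by simpa using hk
      have hnat : d 0 + d 1 ≠ 0 := by
        fin_cases k <;> simp only [Fin.mk_zero, Fin.mk_one] at hk' <;> omega
      exact_mod_cast Nat.cast_ne_zero.mpr hnat
    exact (mul_eq_zero.mp h0).resolve_left hne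

end Aux

open Polynomial

theorem stmt19 (b : ℂ) (f : MvPolynomial (Fin 2) ℂ) (hf : f ≠ 0)
    (h : ∀ x y z : ℂ, (x + b * y) * ev2 f (x + y) z - (x + b * y + z) * ev2 f x z
      = -z * ev2 f x (y + z)) :
    ∃ c : ℂ, f = MvPolynomial.C c := by
  set s1 : Fin 2 → MvPolynomial (Fin 3) ℂ := ![MvPolynomial.X 0 + MvPolynomial.X 1, MvPolynomial.X 2] with hs1
  set s2 : Fin 2 → MvPolynomial (Fin 3) ℂ := ![MvPolynomial.X 0, MvPolynomial.X 2] with hs2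
  set s3 : Fin 2 → MvPolynomial (Fin 3) ℂ := ![MvPolynomial.X 0, MvPolynomial.X 1 + MvPolynomial.X 2] with hs3
  have hP : (MvPolynomial.X 0 + MvPolynomial.C b * MvPolynomial.X 1) * MvPolynomial.aeval s1 f - (MvPolynomial.X 0 + MvPolynomial.C b * MvPolynomial.X 1 + MvPolynomial.X 2) * MvPolynomial.aeval s2 f
      = - MvPolynomial.X 2 * MvPolynomial.aeval s3 f := by
    apply MvPolynomial.funext
    intro v
    have e1 : (fun i => MvPolynomial.eval v (s1 i)) = ![v 0 + v 1, v 2] := by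
      funext i; fin_cases i <;> simp [hs1]
    have e2 : (fun i => MvPolynomial.eval v (s2 i)) = ![v 0, v 2] := by
      funext i; fin_cases i <;> simp [hs2]
    have e3 : (fun i => MvPolynomial.eval v (s3 i)) = ![v 0, v 1 + v 2] := by
      funext i; fin_cases i <;> simp [hs3]
    simp only [map_sub, map_mul, map_add, map_neg, MvPolynomial.eval_X, MvPolynomial.eval_C,
      eval_aeval3, e1, e2, e3]
    exact h (v 0) (v 1) (v 2)
  have hc1 : MvPolynomial.pderiv (1 : Fin 3) (MvPolynomial.aeval s1 f) = MvPolynomial.aeval s1 (MvPolynomial.pderiv 0 f) := by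
    rw [chain3]
    simp [hs1, MvPolynomial.pderiv_X_of_ne]
  have hc2 : MvPolynomial.pderiv (1 : Fin 3) (MvPolynomial.aeval s2 f) = 0 := by
    rw [chain3]
    simp [hs2, MvPolynomial.pderiv_X_of_ne]
  have hc3 : MvPolynomial.pderiv (1 : Fin 3) (MvPolynomial.aeval s3 f) = MvPolynomial.aeval s3 (MvPolynomial.pderiv 1 f) := by
    rw [chain3]
    simp [hs3, MvPolynomial.pderiv_X_of_ne]
  have hb1 : MvPolynomial.pderiv (1 : Fin 3) (MvPolynomial.X 0 + MvPolynomial.C b * MvPolynomial.X 1) = MvPolynomial.C b := by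
    simp [MvPolynomial.pderiv_C_mul, MvPolynomial.pderiv_X_of_ne]
  have hb2 : MvPolynomial.pderiv (1 : Fin 3) (MvPolynomial.X 0 + MvPolynomial.C b * MvPolynomial.X 1 + MvPolynomial.X 2) = MvPolynomial.C b := by
    simp [MvPolynomial.pderiv_C_mul, MvPolynomial.pderiv_X_of_ne]
  have hb3 : MvPolynomial.pderiv (1 : Fin 3) (-MvPolynomial.X 2 : MvPolynomial (Fin 3) ℂ) = 0 := by
    simp [MvPolynomial.pderiv_X_of_ne]
  have hD : MvPolynomial.C b * MvPolynomial.aeval s1 f + (MvPolynomial.X 0 + MvPolynomial.C b * MvPolynomial.X 1) * MvPolynomial.aeval s1 (MvPolynomial.pderiv 0 f)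
      - MvPolynomial.C b * MvPolynomial.aeval s2 f = - (MvPolynomial.X 2 * MvPolynomial.aeval s3 (MvPolynomial.pderiv 1 f)) := by
    have hD0 := congrArg (MvPolynomial.pderiv (1 : Fin 3)) hP
    rw [map_sub, MvPolynomial.pderiv_mul, MvPolynomial.pderiv_mul, MvPolynomial.pderiv_mul, hc1, hc2, hc3, hb1, hb2, hb3] at hD0
    linear_combination hD0
  set ψ : MvPolynomial (Fin 3) ℂ →ₐ[ℂ] MvPolynomial (Fin 2) ℂ :=
    MvPolynomial.aeval ![MvPolynomial.X 0, 0, MvPolynomial.X 1] with hψ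
  have k1 : ∀ g : MvPolynomial (Fin 2) ℂ, ψ (MvPolynomial.aeval s1 g) = g := by
    intro g
    rw [MvPolynomial.comp_aeval_apply]
    have : (fun i => ψ (s1 i)) = MvPolynomial.X := by
      funext i; fin_cases i <;> simp [hψ, hs1]
    rw [this, MvPolynomial.aeval_X_left_apply]
  have k2 : ∀ g : MvPolynomial (Fin 2) ℂ, ψ (MvPolynomial.aeval s2 g) = g := by
    intro g
    rw [MvPolynomial.comp_aeval_apply]
    have : (fun i => ψ (s2 i)) = MvPolynomial.X := by
      funext i; fin_cases i <;> simp [hψ, hs2]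
    rw [this, MvPolynomial.aeval_X_left_apply]
  have k3 : ∀ g : MvPolynomial (Fin 2) ℂ, ψ (MvPolynomial.aeval s3 g) = g := by
    intro g
    rw [MvPolynomial.comp_aeval_apply]
    have : (fun i => ψ (s3 i)) = MvPolynomial.X := by
      funext i; fin_cases i <;> simp [hψ, hs3]
    rw [this, MvPolynomial.aeval_X_left_apply]
  have hE : MvPolynomial.X 0 * MvPolynomial.pderiv 0 f + MvPolynomial.X 1 * MvPolynomial.pderiv 1 f = 0 := by
    have hD1 := congrArg ψ hD
    simp only [map_add, map_sub, map_mul, map_neg, k1, k2, k3] at hD1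
    simp only [map_add, map_sub, map_mul, map_neg, k1, k2, k3, hψ, MvPolynomial.aeval_X, MvPolynomial.aeval_C,
      MvPolynomial.algebraMap_eq, Matrix.cons_val_zero, Matrix.cons_val_one,
      Matrix.head_cons, Matrix.cons_val_two, Matrix.tail_cons] at hD1
    linear_combination hD1
  exact ⟨MvPolynomial.coeff 0 f, euler_const f hE⟩
end
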